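/- arXiv:0809.3754 — 5 statements merged into one kernel-verified Lean document; each statement's English description precedes it below -/
import Mathlib

section
/- Let d ≥ 2 and k ≥ 1 be integers and let σ_d : ℝ/ℤ → ℝ/ℤ be the angle-multiplication map α ↦ d·α (equivalently z ↦ z^d on the unit circle). If K ⊆ ℝ/ℤ is a set such that the diameters diam(σ_d^{ik}(K)) of the iterated images tend to 0 as i → ∞, then there exists i₀ such that diam(σ_d^{i₀k}(K)) = 0, i.e. σ_d^{i₀k}(K) is a subsingleton. -/
open Set Filter Topology Metric

lemma coe_round_aux (x : ℝ) : ((x - round x : ℝ) : AddCircle (1:ℝ)) = (x : AddCircle (1:ℝ)) := by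
  rw [QuotientAddGroup.mk_sub]
  have : ((round x : ℝ) : AddCircle (1:ℝ)) = 0 := by
    rw [AddCircle.coe_eq_zero_iff]
    exact ⟨round x, by simp⟩
  rw [this, sub_zero]

lemma norm_nsmul_of_le_aux (n : ℕ) (a : AddCircle (1:ℝ)) (h : (n:ℝ) * ‖a‖ ≤ 1/2) :
    ‖n • a‖ = (n:ℝ) * ‖a‖ := by
  obtain ⟨x, rfl⟩ := QuotientAddGroup.mk_surjective a
  set y := x - round x with hy
  have hcoe : ((y : ℝ) : AddCircle (1:ℝ)) = (x : AddCircle (1:ℝ)) := coe_round_aux x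
  have hyle : |y| ≤ 1/2 := by simpa using abs_sub_round x
  have hnorm : ‖(x : AddCircle (1:ℝ))‖ = |y| := by
    rw [← hcoe]
    exact (AddCircle.norm_coe_eq_abs_iff (p := (1:ℝ)) one_ne_zero).mpr (by simpa using hyle)
  have hny : |(n:ℝ) * y| ≤ 1/2 := by
    rw [abs_mul, abs_of_nonneg (by positivity : (0:ℝ) ≤ (n:ℝ))]
    rw [hnorm] at h; exact h
  have heq : (n : ℕ) • (x : AddCircle (1:ℝ)) = (((n:ℝ) * y : ℝ) : AddCircle (1:ℝ)) := by
    rw [← hcoe, ← QuotientAddGroup.mk_nsmul, nsmul_eq_mul]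
  rw [heq, (AddCircle.norm_coe_eq_abs_iff (p := (1:ℝ)) one_ne_zero).mpr (by simpa using hny),
    abs_mul, abs_of_nonneg (by positivity : (0:ℝ) ≤ (n:ℝ)), hnorm]

lemma dist_nsmul_of_le_aux (n : ℕ) (x y : AddCircle (1:ℝ))
    (h : (n:ℝ) * dist x y ≤ 1/2) : dist (n • x) (n • y) = (n:ℝ) * dist x y := by
  rw [dist_eq_norm] at h ⊢
  rw [← smul_sub]
  rw [dist_eq_norm]; exact norm_nsmul_of_le_aux n (x - y) h

lemma diam_nsmul_image_aux (n : ℕ) (S : Set (AddCircle (1:ℝ)))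
    (h : Metric.diam S ≤ 1 / (2 * n)) (hn : 1 ≤ n) :
    (n:ℝ) * Metric.diam S ≤ Metric.diam ((fun a => n • a) '' S) := by
  have hnpos : (0:ℝ) < n := by exact_mod_cast hn
  have hb : Bornology.IsBounded ((fun a => n • a) '' S) := Metric.isBounded_of_compactSpace
  have key : Metric.diam S ≤ Metric.diam ((fun a => n • a) '' S) / n := by
    apply Metric.diam_le_of_forall_dist_le
    · positivity
    · intro x hx y hy
      have hd : (n:ℝ) * dist x y ≤ 1/2 := by
        have h1 : dist x y ≤ Metric.diam S :=
          Metric.dist_le_diam_of_mem Metric.isBounded_of_compactSpace hx hy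
        calc (n:ℝ) * dist x y ≤ (n:ℝ) * (1 / (2 * n)) := by
              apply mul_le_mul_of_nonneg_left (h1.trans h) (le_of_lt hnpos)
          _ ≤ 1/2 := by rw [mul_one_div]; rw [div_le_div_iff₀ (by positivity) (by norm_num)]; nlinarith
      have := dist_nsmul_of_le_aux n x y hd
      rw [le_div_iff₀ hnpos, mul_comm, ← this]
      exact Metric.dist_le_diam_of_mem hb ⟨x, hx, rfl⟩ ⟨y, hy, rfl⟩
  calc (n:ℝ) * Metric.diam S ≤ (n:ℝ) * (Metric.diam ((fun a => n • a) '' S) / n) :=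
        mul_le_mul_of_nonneg_left key (le_of_lt hnpos)
    _ = Metric.diam ((fun a => n • a) '' S) := by field_simp

/-- If the diameters of the images of a set `K ⊆ ℝ/ℤ` under the iterates
`σ_d^{ik}` of the angle-`d`-tupling map tend to `0`, then some image
`σ_d^{i₀k}(K)` already has diameter `0`, i.e. is a subsingleton. -/
theorem expansivity_of_sigma_d (d k : ℕ) (hd : 2 ≤ d) (hk : 1 ≤ k)
    (σ : AddCircle (1 : ℝ) → AddCircle (1 : ℝ)) (hσ : σ = fun α => d • α)
    (K : Set (AddCircle (1 : ℝ)))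
    (hdiam : Tendsto (fun i : ℕ => Metric.diam (σ^[i * k] '' K)) atTop (𝓝 0)) :
    ∃ i₀ : ℕ, Metric.diam (σ^[i₀ * k] '' K) = 0 ∧ (σ^[i₀ * k] '' K).Subsingleton := by
  -- iterates of σ are nsmul by powers of d
  have hiter : ∀ (m : ℕ) (a : AddCircle (1:ℝ)), σ^[m] a = (d ^ m) • a := by
    intro m
    induction m with
    | zero => intro a; simp
    | succ m ih =>
      intro a
      rw [Function.iterate_succ_apply', ih, hσ]
      simp [pow_succ, mul_smul, mul_comm]
  set n := d ^ k with hn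
  have hn2 : 2 ≤ n := le_trans hd (Nat.le_self_pow (by omega) d)
  have hnR : (2:ℝ) ≤ (n:ℝ) := by exact_mod_cast hn2
  set g : ℕ → ℝ := fun i => Metric.diam (σ^[i * k] '' K) with hg
  -- the recursion between consecutive images
  have himg : ∀ i : ℕ, σ^[(i+1) * k] '' K = (fun a => n • a) '' (σ^[i * k] '' K) := by
    intro i
    rw [Set.image_image]
    apply Set.image_congr'
    intro x
    have : (i+1) * k = k + i * k := by ring
    rw [this, Function.iterate_add_apply, hiter k]
  have hstep : ∀ i : ℕ, g i ≤ 1 / (2 * n) → (n:ℝ) * g i ≤ g (i+1) := by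
    intro i hi
    have := diam_nsmul_image_aux n (σ^[i * k] '' K) hi (by omega)
    rw [hg]; simp only
    rw [himg i]
    exact this
  by_contra hcon
  push_neg at hcon
  -- all diameters are positive
  have hpos : ∀ i : ℕ, 0 < g i := by
    intro i
    rcases lt_or_eq_of_le (Metric.diam_nonneg (s := σ^[i * k] '' K)) with h | h
    · exact h
    · exfalso
      have hsub : (σ^[i * k] '' K).Subsingleton := by
        have hb : Bornology.IsBounded (σ^[i * k] '' K) := Metric.isBounded_of_compactSpace
        have hne : EMetric.diam (σ^[i * k] '' K) ≠ ⊤ := hb.ediam_ne_top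
        have : EMetric.diam (σ^[i * k] '' K) = 0 := by
          have h' : (EMetric.diam (σ^[i * k] '' K)).toReal = 0 := h.symm
          exact (ENNReal.toReal_eq_zero_iff _).mp h' |>.resolve_right hne
        exact EMetric.diam_eq_zero_iff.mp this
      exact (hcon i h.symm).not_subsingleton hsub
  -- eventually all diameters are small
  have hε : (0:ℝ) < 1 / (2 * n) := by positivity
  have hev : ∀ᶠ i in atTop, g i < 1 / (2 * n) := by
    have := hdiam.eventually (gt_mem_nhds hε)
    exact this
  obtain ⟨N, hN⟩ := hev.exists_forall_of_atTop
  -- geometric growth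
  have hgrow : ∀ m : ℕ, (2:ℝ)^m * g N ≤ g (N + m) := by
    intro m
    induction m with
    | zero => simp
    | succ m ih =>
      have hsmall : g (N + m) ≤ 1 / (2 * n) := le_of_lt (hN (N + m) (by omega))
      have h1 : (n:ℝ) * g (N + m) ≤ g (N + m + 1) := hstep (N + m) hsmall
      have h2 : (2:ℝ) * g (N + m) ≤ (n:ℝ) * g (N + m) :=
        mul_le_mul_of_nonneg_right hnR (le_of_lt (hpos (N + m)))
      calc (2:ℝ)^(m+1) * g N = 2 * ((2:ℝ)^m * g N) := by ring
        _ ≤ 2 * g (N + m) := by linarith [mul_le_mul_of_nonneg_left ih (by norm_num : (0:ℝ) ≤ 2)]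
        _ ≤ g (N + m + 1) := le_trans h2 h1
      |>.trans_eq (by ring_nf)
  -- contradiction
  obtain ⟨m, hm⟩ := pow_unbounded_of_one_lt ((1 / (2 * (n:ℝ))) / g N) (by norm_num : (1:ℝ) < 2)
  have h1 : 1 / (2 * (n:ℝ)) < (2:ℝ)^m * g N := by
    rw [div_lt_iff₀ (hpos N)] at hm
    linarith
  have h2 : g (N + m) < 1 / (2 * n) := hN (N + m) (by omega)
  linarith [hgrow m]
end

section
/- Let Q ⊆ ℂ be an unshielded continuum and Ψ a Riemann map for its basin of infinity as in the context. Then there exists a partition 𝒟 of Q such that: (i) every element of 𝒟 is a closed connected subset of Q; (ii) 𝒟 is upper semi-continuous; (iii) every impression Imp(α), α ∈ ℝ/ℤ, is contained in a single element of 𝒟; and (iv) 𝒟 is finest with respect to (ii)–(iii): for every upper semi-continuous partition 𝒟' of Q in which each impression is contained in a single element, every element of 𝒟 is contained in an element of 𝒟'. -/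
open Set Filter Topology Metric

noncomputable section


/-- The point `e^{2πiα}` on the unit circle corresponding to an angle `α ∈ ℝ/ℤ`. -/
def circlePoint (α : AddCircle (1 : ℝ)) : ℂ := (AddCircle.toCircle α : ℂ)

/-- The basin of infinity of a compact set `Q ⊆ ℂ`: the union of the unbounded
connected components of `ℂ ∖ Q` (for `Q` a continuum there is exactly one). -/
def basin (Q : Set ℂ) : Set ℂ :=
  {z | z ∉ Q ∧ ¬ Bornology.IsBounded (connectedComponentIn Qᶜ z)}

/-- `Q` is an unshielded continuum: a compact connected nonempty subset of `ℂ`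
which coincides with the boundary of its basin of infinity. -/
def Unshielded (Q : Set ℂ) : Prop :=
  IsCompact Q ∧ IsConnected Q ∧ Q = frontier (basin Q)

/-- `Ψ` is a Riemann map for the basin of infinity of `Q`: a holomorphic bijection
from `{z : |z| > 1}` onto the basin of infinity. -/
def RiemannMap (Q : Set ℂ) (Ψ : ℂ → ℂ) : Prop :=
  DifferentiableOn ℂ Ψ {z | 1 < ‖z‖} ∧
  Set.BijOn Ψ {z | 1 < ‖z‖} (basin Q)

/-- The impression of the external angle `α`. -/
def impression (Ψ : ℂ → ℂ) (α : AddCircle (1 : ℝ)) : Set ℂ :=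
  {w | ∃ z : ℕ → ℂ, (∀ n, 1 < ‖z n‖) ∧
        Tendsto z atTop (𝓝 (circlePoint α)) ∧
        Tendsto (fun n => Ψ (z n)) atTop (𝓝 w)}

/-- The external ray of angle `α`. -/
def extRay (Ψ : ℂ → ℂ) (α : AddCircle (1 : ℝ)) : Set ℂ :=
  Ψ '' {z | ∃ r : ℝ, 1 < r ∧ z = (r : ℂ) * circlePoint α}

/-- The principal set of the external angle `α`. -/
def principalSet (Ψ : ℂ → ℂ) (α : AddCircle (1 : ℝ)) : Set ℂ :=
  closure (extRay Ψ α) \ extRay Ψ α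

/-- A closed equivalence relation (its graph, within `Q × Q`, is closed) such that
every impression is contained in a single equivalence class. -/
structure IsClosedEquivRespImp (Q : Set ℂ) (Ψ : ℂ → ℂ) (r : ℂ → ℂ → Prop) : Prop where
  equivalence : Equivalence r
  closedGraph : IsClosed {p : ℂ × ℂ | p.1 ∈ Q ∧ p.2 ∈ Q ∧ r p.1 p.2}
  resp : ∀ α : AddCircle (1 : ℝ), ∀ x ∈ impression Ψ α, ∀ y ∈ impression Ψ α, r x y

/-- The relation `≈₀`: the intersection of all closed equivalence relations on `Q`
in which every impression is contained in a single class. -/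
def finestRel (Q : Set ℂ) (Ψ : ℂ → ℂ) (x y : ℂ) : Prop :=
  ∀ r : ℂ → ℂ → Prop, IsClosedEquivRespImp Q Ψ r → r x y

/-- The partition `𝒟` of `Q` whose elements are the connected components of the
`≈₀`-classes; its elements are the fibers of the finest monotone map of `Q`
onto a locally connected continuum. -/
def finestPartition (Q : Set ℂ) (Ψ : ℂ → ℂ) : Set (Set ℂ) :=
  {D | ∃ x ∈ Q, D = connectedComponentIn {y ∈ Q | finestRel Q Ψ x y} x}

/-- A ray-compactum in `Q`: a compact subset of `Q` together with a closed set of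
angles whose principal sets it contains and in the union of whose impressions
it is contained. -/
structure RayCompactum (Q : Set ℂ) (Ψ : ℂ → ℂ) where
  carrier : Set ℂ
  angles : Set (AddCircle (1 : ℝ))
  carrier_subset : carrier ⊆ Q
  isCompact_carrier : IsCompact carrier
  isClosed_angles : IsClosed angles
  principal_subset : ∀ θ ∈ angles, principalSet Ψ θ ⊆ carrier
  subset_impressions : carrier ⊆ ⋃ θ ∈ angles, impression Ψ θ

/-- `C̃ = C ∪ ⋃_{θ ∈ Θ(C)} R_θ`. -/
def RayCompactum.tilde {Q : Set ℂ} {Ψ : ℂ → ℂ} (C : RayCompactum Q Ψ) : Set ℂ :=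
  C.carrier ∪ ⋃ θ ∈ C.angles, extRay Ψ θ

/-- A ray-compactum `C` ray-separates the sets `A` and `B`. -/
def RaySeparates {Q : Set ℂ} {Ψ : ℂ → ℂ} (C : RayCompactum Q Ψ) (A B : Set ℂ) : Prop :=
  C.carrier ∩ (A ∪ B) = ∅ ∧
  ∀ z ∈ closure (basin Q) \ C.tilde,
    ¬ ((connectedComponentIn (closure (basin Q) \ C.tilde) z ∩ A).Nonempty ∧
       (connectedComponentIn (closure (basin Q) \ C.tilde) z ∩ B).Nonempty)

/-- A ray-compactum `C` ray-separates a set `X` if it ray-separates some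
pair of (distinct) points of `X`. -/
def RaySeparatesSet {Q : Set ℂ} {Ψ : ℂ → ℂ} (C : RayCompactum Q Ψ) (X : Set ℂ) : Prop :=
  ∃ x ∈ X, ∃ y ∈ X, x ≠ y ∧ RaySeparates C {x} {y}

/-- A well-slicing family for a continuum `X ⊆ Q`. -/
structure IsWellSlicing {Q : Set ℂ} {Ψ : ℂ → ℂ}
    (𝒞 : Set (RayCompactum Q Ψ)) (X : Set ℂ) : Prop where
  nontrivial : ∃ C₁ ∈ 𝒞, ∃ C₂ ∈ 𝒞, C₁ ≠ C₂
  pairwiseDisjoint : ∀ C₁ ∈ 𝒞, ∀ C₂ ∈ 𝒞, C₁ ≠ C₂ → Disjoint C₁.carrier C₂.carrier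
  separates : ∀ C ∈ 𝒞, RaySeparatesSet C X
  middle : ∀ C₁ ∈ 𝒞, ∀ C₂ ∈ 𝒞, C₁ ≠ C₂ → ∃ C₃ ∈ 𝒞, RaySeparates C₃ C₁.carrier C₂.carrier

/-- An upper semi-continuous partition `𝒟` of `Q` in which every impression is
contained in a single element: the elements are nonempty, pairwise disjoint
subsets of `Q` covering `Q`; the associated equivalence relation has closed
graph in `Q × Q`; and each impression is contained in one element. -/
def IsUSCImpPartition (Q : Set ℂ) (Ψ : ℂ → ℂ) (𝒟 : Set (Set ℂ)) : Prop :=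
  (∀ D ∈ 𝒟, D.Nonempty ∧ D ⊆ Q) ∧ ⋃₀ 𝒟 = Q ∧
  (∀ D₁ ∈ 𝒟, ∀ D₂ ∈ 𝒟, D₁ ≠ D₂ → Disjoint D₁ D₂) ∧
  IsClosed {p : ↥Q × ↥Q | ∃ D ∈ 𝒟, (p.1 : ℂ) ∈ D ∧ (p.2 : ℂ) ∈ D} ∧
  ∀ α : AddCircle (1 : ℝ), ∃ D ∈ 𝒟, impression Ψ α ⊆ D

def Complex.abs : AbsoluteValue ℂ ℝ where
  toFun z := ‖z‖
  map_mul' := norm_mul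
  nonneg' := norm_nonneg
  eq_zero' _ := norm_eq_zero
  add_le' := norm_add_le

lemma Complex.norm_eq_abs (z : ℂ) : ‖z‖ = Complex.abs z := rfl

lemma Complex.continuous_abs : Continuous Complex.abs := continuous_norm

lemma Complex.abs_ofReal (r : ℝ) : Complex.abs r = |r| := by
  rw [← Complex.norm_eq_abs, Complex.norm_real, Real.norm_eq_abs]

lemma Complex.abs_exp (z : ℂ) : Complex.abs (Complex.exp z) = Real.exp z.re :=
  Complex.norm_exp z

lemma Complex.abs_two : Complex.abs 2 = 2 := by
  rw [← Complex.norm_eq_abs]; norm_num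

lemma Complex.abs_apply (z : ℂ) : Complex.abs z = Real.sqrt (Complex.normSq z) := by
  rw [← Complex.norm_eq_abs, Complex.norm_def]

lemma Complex.sq_abs (z : ℂ) : Complex.abs z ^ 2 = Complex.normSq z := Complex.sq_norm z

lemma Complex.abs_mul_exp_arg_mul_I (x : ℂ) :
    ↑(Complex.abs x) * Complex.exp (↑(Complex.arg x) * Complex.I) = x :=
  Complex.norm_mul_exp_arg_mul_I x

lemma Circle.abs_coe (z : Circle) : Complex.abs z = 1 := Circle.norm_coe z

lemma aux_isOpen_outer (a : ℝ) : IsOpen {z : ℂ | a < Complex.abs z} :=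
  isOpen_lt continuous_const Complex.continuous_abs

lemma aux_preconn_outer (a : ℝ) (ha : 0 < a) :
    IsPreconnected {z : ℂ | a < Complex.abs z} := by
  have h : {z : ℂ | a < Complex.abs z} = Complex.exp '' {w : ℂ | Real.log a < w.re} := by
    ext z
    constructor
    · intro hz
      have hz0 : z ≠ 0 := by
        intro h0; rw [h0] at hz; simp at hz; linarith
      refine ⟨Complex.log z, ?_, Complex.exp_log hz0⟩
      simp only [mem_setOf_eq, Complex.log_re]
      exact Real.log_lt_log ha hz
    · rintro ⟨w, hw, rfl⟩
      simp only [mem_setOf_eq, Complex.abs_exp]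
      calc a = Real.exp (Real.log a) := (Real.exp_log ha).symm
        _ < Real.exp w.re := Real.exp_lt_exp.2 hw
  rw [h]
  exact ((convex_halfSpace_re_gt _).isPreconnected).image _ Complex.continuous_exp.continuousOn

lemma aux_preconn_annulus (a b : ℝ) (ha : 0 < a) (hb : 0 < b) :
    IsPreconnected {z : ℂ | a < Complex.abs z ∧ Complex.abs z < b} := by
  have h : {z : ℂ | a < Complex.abs z ∧ Complex.abs z < b}
      = Complex.exp '' {w : ℂ | Real.log a < w.re ∧ w.re < Real.log b} := by
    ext z
    constructor
    · rintro ⟨h1, h2⟩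
      have hz0 : z ≠ 0 := by
        intro h0; rw [h0] at h1; simp at h1; linarith
      refine ⟨Complex.log z, ⟨?_, ?_⟩, Complex.exp_log hz0⟩
      · simp only [Complex.log_re]; exact Real.log_lt_log ha h1
      · simp only [Complex.log_re]
        exact Real.log_lt_log (lt_trans ha h1) h2
    · rintro ⟨w, ⟨hw1, hw2⟩, rfl⟩
      simp only [mem_setOf_eq, Complex.abs_exp]
      constructor
      · calc a = Real.exp (Real.log a) := (Real.exp_log ha).symm
          _ < Real.exp w.re := Real.exp_lt_exp.2 hw1
      · calc Real.exp w.re < Real.exp (Real.log b) := Real.exp_lt_exp.2 hw2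
          _ = b := Real.exp_log hb
  rw [h]
  have hconv : Convex ℝ {w : ℂ | Real.log a < w.re ∧ w.re < Real.log b} := by
    exact (convex_halfSpace_re_gt (Real.log a)).inter (convex_halfSpace_re_lt (Real.log b))
  exact hconv.isPreconnected.image _ Complex.continuous_exp.continuousOn

lemma aux_basin_open (Q : Set ℂ) (hQc : IsClosed Q) : IsOpen (basin Q) := by
  rw [isOpen_iff_mem_nhds]
  intro z hz
  have hzc : z ∈ Qᶜ := hz.1
  have hV : IsOpen (connectedComponentIn Qᶜ z) := hQc.isOpen_compl.connectedComponentIn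
  refine Filter.mem_of_superset (hV.mem_nhds (mem_connectedComponentIn hzc)) ?_
  intro y hy
  refine ⟨connectedComponentIn_subset _ _ hy, ?_⟩
  rw [← connectedComponentIn_eq hy]
  exact hz.2

lemma aux_Q_eq (Q : Set ℂ) (hQ : Unshielded Q) : Q = closure (basin Q) \ basin Q := by
  have hop : IsOpen (basin Q) := aux_basin_open Q hQ.1.isClosed
  calc Q = frontier (basin Q) := hQ.2.2
    _ = closure (basin Q) \ basin Q := by rw [frontier, hop.interior_eq]

lemma aux_far_subset_basin (Q : Set ℂ) (M : ℝ) (hM : 1 ≤ M)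
    (hQM : ∀ q ∈ Q, Complex.abs q ≤ M) : {z : ℂ | M < Complex.abs z} ⊆ basin Q := by
  intro z hz
  have hzQ : z ∉ Q := fun h => absurd (hQM z h) (not_le.2 hz)
  refine ⟨hzQ, fun hbd => ?_⟩
  have hsub : {w : ℂ | M < Complex.abs w} ⊆ connectedComponentIn Qᶜ z := by
    refine (aux_preconn_outer M (by linarith)).subset_connectedComponentIn hz ?_
    intro w hw h
    exact absurd (hQM w h) (not_le.2 hw)
  obtain ⟨r, hr⟩ := (hbd.subset hsub).subset_closedBall 0
  have hmem : ((max r M + 1 : ℝ) : ℂ) ∈ {w : ℂ | M < Complex.abs w} := by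
    simp only [mem_setOf_eq, Complex.abs_ofReal]
    rw [abs_of_pos (by positivity)]
    have := le_max_right r M; linarith
  have := hr hmem
  rw [mem_closedBall, Complex.dist_eq, sub_zero, Complex.norm_eq_abs, Complex.abs_ofReal,
    abs_of_pos (by positivity)] at this
  have := le_max_left r M; linarith

lemma aux_openMap {Q : Set ℂ} {Ψ : ℂ → ℂ} (hΨ : RiemannMap Q Ψ) :
    ∀ s ⊆ {z : ℂ | 1 < Complex.abs z}, IsOpen s → IsOpen (Ψ '' s) := by
  have han : AnalyticOnNhd ℂ Ψ {z : ℂ | 1 < Complex.abs z} :=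
    hΨ.1.analyticOnNhd (aux_isOpen_outer 1)
  rcases han.is_constant_or_isOpen (aux_preconn_outer 1 one_pos) with ⟨v, hv⟩ | hop
  · exfalso
    have h2 : (2 : ℂ) ∈ {z : ℂ | 1 < Complex.abs z} := by
      simp [Complex.abs_two]
    have h3 : (3 : ℂ) ∈ {z : ℂ | 1 < Complex.abs z} := by
      norm_num [mem_setOf_eq, ← Complex.norm_eq_abs]
    have : (2 : ℂ) = 3 := hΨ.2.injOn h2 h3 ((hv 2 h2).trans (hv 3 h3).symm)
    norm_num at this
  · exact hop

lemma aux_tendsto_preimage {Q : Set ℂ} {Ψ : ℂ → ℂ} (hΨ : RiemannMap Q Ψ)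
    {z : ℕ → ℂ} (hz : ∀ n, z n ∈ {w : ℂ | 1 < Complex.abs w})
    {ζ : ℂ} (hζ : ζ ∈ {w : ℂ | 1 < Complex.abs w})
    (h : Tendsto (fun n => Ψ (z n)) atTop (𝓝 (Ψ ζ))) : Tendsto z atTop (𝓝 ζ) := by
  rw [Metric.tendsto_atTop]
  intro ε hε
  have hso : IsOpen (Ψ '' (ball ζ ε ∩ {w : ℂ | 1 < Complex.abs w})) :=
    aux_openMap hΨ _ inter_subset_right (isOpen_ball.inter (aux_isOpen_outer 1))
  have hmem : Ψ ζ ∈ Ψ '' (ball ζ ε ∩ {w : ℂ | 1 < Complex.abs w}) :=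
    ⟨ζ, ⟨mem_ball_self hε, hζ⟩, rfl⟩
  have hev : ∀ᶠ n in atTop, Ψ (z n) ∈ Ψ '' (ball ζ ε ∩ {w : ℂ | 1 < Complex.abs w}) :=
    h.eventually (hso.mem_nhds hmem)
  rw [eventually_atTop] at hev
  obtain ⟨N, hN⟩ := hev
  refine ⟨N, fun n hn => ?_⟩
  obtain ⟨w, ⟨hw1, hw2⟩, hw3⟩ := hN n hn
  have : z n = w := hΨ.2.injOn (hz n) hw2 hw3.symm
  rw [this]; exact hw1

lemma aux_impression_subset {Q : Set ℂ} {Ψ : ℂ → ℂ} (hQ : Unshielded Q)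
    (hΨ : RiemannMap Q Ψ) (α : AddCircle (1 : ℝ)) : impression Ψ α ⊆ Q := by
  rintro w ⟨z, hz1, hz2, hz3⟩
  have hzU : ∀ n, z n ∈ {w : ℂ | 1 < Complex.abs w} := fun n => hz1 n
  have hcl : w ∈ closure (basin Q) :=
    mem_closure_of_tendsto hz3 (Eventually.of_forall fun n => hΨ.2.mapsTo (hzU n))
  have hnb : w ∉ basin Q := by
    intro hw
    obtain ⟨ζ, hζ, hζw⟩ := hΨ.2.surjOn hw
    have := aux_tendsto_preimage hΨ hzU hζ (by rw [hζw]; exact hz3)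
    have hcirc : circlePoint α = ζ := tendsto_nhds_unique hz2 this
    have h1 : Complex.abs (circlePoint α) = 1 := Circle.abs_coe _
    rw [hcirc] at h1
    simp only [mem_setOf_eq] at hζ
    rw [Complex.norm_eq_abs] at hζ
    linarith
  rw [aux_Q_eq Q hQ]
  exact ⟨hcl, hnb⟩

lemma aux_A_preconn (c : ℂ) (hc : Complex.abs c = 1) (δ : ℝ) (h0 : 0 < δ) (h2 : δ ≤ 1/2) :
    IsPreconnected {z : ℂ | 1 < Complex.abs z ∧ Complex.abs (z - c) < δ} := by
  set A := {z : ℂ | 1 < Complex.abs z ∧ Complex.abs (z - c) < δ} with hA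
  have hc0 : c ≠ 0 := by
    intro h; rw [h] at hc; simp at hc
  -- the radial segment
  set L := (fun s : ℝ => (s : ℂ) * c) '' Ioo 1 (1 + δ) with hL
  have hLA : L ⊆ A := by
    rintro _ ⟨s, ⟨hs1, hs2⟩, rfl⟩
    constructor
    · simp only [mem_setOf_eq, map_mul, Complex.abs_ofReal, hc]
      rw [abs_of_pos (by linarith)]; linarith
    · have : (s : ℂ) * c - c = ((s - 1 : ℝ) : ℂ) * c := by push_cast; ring
      rw [this, map_mul, Complex.abs_ofReal, hc, mul_one, abs_of_pos (by linarith)]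
      linarith
  have hLpc : IsPreconnected L :=
    (isPreconnected_Ioo).image _ ((Complex.continuous_ofReal.mul continuous_const).continuousOn)
  -- arcs
  have harc : ∀ r : ℝ, 1 < r → r < 1 + δ →
      IsPreconnected {z : ℂ | Complex.abs z = r ∧ Complex.abs (z - c) < δ} := by
    intro r hr1 hr2
    set S := {z : ℂ | Complex.abs z = r ∧ Complex.abs (z - c) < δ} with hS
    set f : ℝ → ℂ := fun t => (r : ℂ) * Complex.exp (t * Complex.I) * c with hf
    have habsf : ∀ t : ℝ, Complex.abs (f t) = r := by
      intro t
      simp only [hf, map_mul, Complex.abs_ofReal, hc, mul_one, Complex.abs_exp]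
      rw [abs_of_pos (by linarith)]
      simp
    set T := {t : ℝ | t ∈ Ioo (-Real.pi) Real.pi ∧ Complex.abs (f t - c) < δ} with hT
    have hST : S = f '' T := by
      ext z
      constructor
      · rintro ⟨hz1, hz2⟩
        have hrc : (r : ℂ) * c ≠ 0 := by
          apply mul_ne_zero _ hc0
          simp only [ne_eq, Complex.ofReal_eq_zero]
          linarith
        set w := z / ((r : ℂ) * c) with hw
        have habsw : Complex.abs w = 1 := by
          rw [hw, map_div₀, hz1, map_mul, Complex.abs_ofReal, hc, mul_one,
            abs_of_pos (by linarith), div_self (by linarith)]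
        have hwne : Complex.arg w ≠ Real.pi := by
          intro hargw
          rw [Complex.arg_eq_pi_iff] at hargw
          have hwm1 : w = -1 := by
            have h1 : Complex.abs w = |w.re| := by
              rw [Complex.abs_apply, Complex.normSq_apply, hargw.2]
              rw [← Real.sqrt_sq_eq_abs]; ring_nf
            apply Complex.ext
            · have := habsw; rw [h1] at this
              rw [abs_of_neg hargw.1] at this
              simp; linarith
            · simp [hargw.2]
          have hzw : z = w * ((r:ℂ) * c) := by rw [hw, div_mul_cancel₀ z hrc]
          have hz : z = -((r:ℂ) * c) := by rw [hzw, hwm1]; ring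
          rw [hz] at hz2
          have : -((r:ℂ)*c) - c = ((-(r+1) : ℝ) : ℂ) * c := by push_cast; ring
          rw [this, map_mul, Complex.abs_ofReal, hc, mul_one] at hz2
          rw [abs_of_neg (by linarith)] at hz2
          linarith
        have hexpw : Complex.exp (↑(Complex.arg w) * Complex.I) = w := by
          have h5 := Complex.abs_mul_exp_arg_mul_I w
          rw [habsw] at h5
          simpa using h5
        have hfw : f (Complex.arg w) = z := by
          show (r : ℂ) * Complex.exp (↑(Complex.arg w) * Complex.I) * c = z
          rw [hexpw, hw]
          field_simp
          exact mul_div_cancel_left₀ z (left_ne_zero_of_mul hrc)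
        refine ⟨Complex.arg w, ⟨⟨Complex.neg_pi_lt_arg w, lt_of_le_of_ne (Complex.arg_le_pi w) hwne⟩, ?_⟩, hfw⟩
        rw [hfw]; exact hz2
      · rintro ⟨t, ht, rfl⟩
        exact ⟨habsf t, ht.2⟩
    -- square of the distance function
    have hFsq : ∀ t : ℝ, Complex.abs (f t - c) ^ 2 = r ^ 2 + 1 - 2 * r * Real.cos t := by
      intro t
      have hfc : f t - c = ((r : ℂ) * Complex.exp (t * Complex.I) - 1) * c := by
        rw [hf]; ring
      rw [hfc, map_mul, hc, mul_one, Complex.sq_abs, Complex.normSq_apply]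
      have hre : ((r : ℂ) * Complex.exp (↑t * Complex.I) - 1).re = r * Real.cos t - 1 := by
        simp [Complex.exp_ofReal_mul_I_re, Complex.exp_ofReal_mul_I_im]
      have him : ((r : ℂ) * Complex.exp (↑t * Complex.I) - 1).im = r * Real.sin t := by
        simp [Complex.exp_ofReal_mul_I_re, Complex.exp_ofReal_mul_I_im]
      rw [hre, him]
      have := Real.sin_sq_add_cos_sq t
      nlinarith [this]
    have hmono : ∀ a b : ℝ, |a| ≤ |b| → |b| ≤ Real.pi →
        Complex.abs (f a - c) ≤ Complex.abs (f b - c) := by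
      intro a b hab hbpi
      have hcos : Real.cos b ≤ Real.cos a := by
        rw [← Real.cos_abs a, ← Real.cos_abs b]
        exact Real.cos_le_cos_of_nonneg_of_le_pi (abs_nonneg a) hbpi hab
      nlinarith [hFsq a, hFsq b, Complex.abs.nonneg (f a - c), Complex.abs.nonneg (f b - c)]
    have hTo : OrdConnected T := by
      constructor
      intro t₁ h₁ t₂ h₂ t ht
      have habs : |t| ≤ max |t₁| |t₂| := abs_le_max_abs_abs ht.1 ht.2
      constructor
      · have h1 : |t₁| < Real.pi := abs_lt.2 ⟨h₁.1.1, h₁.1.2⟩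
        have h2 : |t₂| < Real.pi := abs_lt.2 ⟨h₂.1.1, h₂.1.2⟩
        have : |t| < Real.pi := lt_of_le_of_lt habs (max_lt h1 h2)
        exact abs_lt.1 this
      · rcases le_total |t₁| |t₂| with hle | hle
        · have : |t| ≤ |t₂| := le_trans habs (by simp [hle])
          exact lt_of_le_of_lt (hmono t t₂ this (le_of_lt (abs_lt.2 ⟨h₂.1.1, h₂.1.2⟩))) h₂.2
        · have : |t| ≤ |t₁| := le_trans habs (by simp [hle])
          exact lt_of_le_of_lt (hmono t t₁ this (le_of_lt (abs_lt.2 ⟨h₁.1.1, h₁.1.2⟩))) h₁.2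
    rw [hST]
    refine hTo.isPreconnected.image _ ?_
    exact ((continuous_const.mul ((Complex.continuous_exp.comp
      (Complex.continuous_ofReal.mul continuous_const)))).mul continuous_const).continuousOn
  -- decomposition of A as a union
  have hdecomp : A = ⋃₀ {s : Set ℂ | ∃ r ∈ Ioo (1:ℝ) (1+δ),
      s = {z : ℂ | Complex.abs z = r ∧ Complex.abs (z - c) < δ} ∪ L} := by
    ext z
    constructor
    · rintro ⟨hz1, hz2⟩
      refine ⟨{w : ℂ | Complex.abs w = Complex.abs z ∧ Complex.abs (w - c) < δ} ∪ L,
        ⟨Complex.abs z, ⟨hz1, ?_⟩, rfl⟩, Or.inl ⟨rfl, hz2⟩⟩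
      have h3 : Complex.abs z - Complex.abs c ≤ Complex.abs (z - c) := by
        have h4 := norm_sub_norm_le z c
        simpa [Complex.norm_eq_abs] using h4
      rw [hc] at h3
      linarith
    · rintro ⟨s, ⟨r, ⟨hr1, hr2⟩, rfl⟩, hz⟩
      rcases hz with hz | hz
      · exact ⟨by rw [hz.1]; exact hr1, hz.2⟩
      · exact hLA hz
  rw [hdecomp]
  refine isPreconnected_sUnion (((1 + δ/2 : ℝ) : ℂ) * c) _ ?_ ?_
  · rintro s ⟨r, hr, rfl⟩
    exact Or.inr ⟨1 + δ/2, ⟨by linarith, by linarith⟩, rfl⟩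
  · rintro s ⟨r, ⟨hr1, hr2⟩, rfl⟩
    apply IsPreconnected.union ((r : ℂ) * c)
    · constructor
      · simp only [mem_setOf_eq, map_mul, Complex.abs_ofReal, hc, mul_one]
        rw [abs_of_pos (by linarith)]
      · have : (r : ℂ) * c - c = ((r - 1 : ℝ) : ℂ) * c := by push_cast; ring
        rw [this, map_mul, Complex.abs_ofReal, hc, mul_one, abs_of_pos (by linarith)]
        linarith
    · exact ⟨r, ⟨hr1, hr2⟩, rfl⟩
    · exact harc r hr1 hr2
    · exact hLpc


lemma aux_nested_preconn (K : ℕ → Set ℂ) (hdec : ∀ n, K (n + 1) ⊆ K n)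
    (hcomp : ∀ n, IsCompact (K n)) (hne : ∀ n, (K n).Nonempty)
    (hconn : ∀ n, IsPreconnected (K n)) : IsPreconnected (⋂ n, K n) := by
  have hanti : ∀ m n, m ≤ n → K n ⊆ K m := by
    intro m n hmn
    induction hmn with
    | refl => exact subset_rfl
    | step _ ih => exact fun x hx => (by exact ih (hdec _ hx) : _)
  set Kinf := ⋂ n, K n with hKinf
  have hKic : IsClosed Kinf := isClosed_iInter fun n => (hcomp n).isClosed
  by_contra h
  rw [IsPreconnected] at h
  push_neg at h
  obtain ⟨U, V, hU, hV, hsub, hne1, hne2, hUV⟩ := h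
  set A := Kinf \ V with hAdef
  set B := Kinf \ U with hBdef
  have hKsub0 : Kinf ⊆ K 0 := iInter_subset K 0
  have hAc : IsCompact A :=
    (hcomp 0).of_isClosed_subset (hKic.inter hV.isClosed_compl) (fun x hx => hKsub0 hx.1)
  have hBc : IsCompact B :=
    (hcomp 0).of_isClosed_subset (hKic.inter hU.isClosed_compl) (fun x hx => hKsub0 hx.1)
  have hABdisj : Disjoint A B := by
    rw [disjoint_iff_inter_eq_empty]
    ext x; simp only [mem_inter_iff, mem_empty_iff_false, iff_false]
    rintro ⟨⟨hx1, hx2⟩, ⟨_, hx4⟩⟩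
    rcases hsub hx1 with h | h
    exacts [hx4 h, hx2 h]
  have hAne : A.Nonempty := by
    obtain ⟨x, hx1, hx2⟩ := hne1
    refine ⟨x, hx1, fun hxV => ?_⟩
    have : x ∈ Kinf ∩ (U ∩ V) := ⟨hx1, hx2, hxV⟩
    rw [hUV] at this; exact this
  have hBne : B.Nonempty := by
    obtain ⟨x, hx1, hx2⟩ := hne2
    refine ⟨x, hx1, fun hxU => ?_⟩
    have : x ∈ Kinf ∩ (U ∩ V) := ⟨hx1, hxU, hx2⟩
    rw [hUV] at this; exact this
  obtain ⟨U', V', hU', hV', hAU', hBV', hUV'⟩ :=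
    SeparatedNhds.of_isCompact_isCompact hAc hBc hABdisj
  have hKinfsub : Kinf ⊆ U' ∪ V' := by
    intro x hx
    by_cases hxV : x ∈ V
    · have hxU : x ∉ U := fun hxU => by
        have : x ∈ Kinf ∩ (U ∩ V) := ⟨hx, hxU, hxV⟩
        rw [hUV] at this; exact this
      exact Or.inr (hBV' ⟨hx, hxU⟩)
    · exact Or.inl (hAU' ⟨hx, hxV⟩)
  -- some K n is inside U' ∪ V'
  have hexN : ∃ n, K n ⊆ U' ∪ V' := by
    by_contra hno
    push_neg at hno
    set E := fun n => K n \ (U' ∪ V') with hE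
    have hEne : ∀ n, (E n).Nonempty := by
      intro n
      obtain ⟨x, hx1, hx2⟩ := Set.not_subset.mp (hno n)
      exact ⟨x, hx1, hx2⟩
    have : (⋂ n, E n).Nonempty := by
      apply IsCompact.nonempty_iInter_of_sequence_nonempty_isCompact_isClosed E
        (fun n => diff_subset_diff_left (hdec n)) hEne
        ((hcomp 0).of_isClosed_subset ((hcomp 0).isClosed.inter (hU'.union hV').isClosed_compl)
          (fun x hx => hx.1))
        (fun n => (hcomp n).isClosed.inter (hU'.union hV').isClosed_compl)
    obtain ⟨x, hx⟩ := this
    have hx1 : x ∈ Kinf := mem_iInter.2 fun n => (mem_iInter.1 hx n).1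
    have hx2 : x ∉ U' ∪ V' := (mem_iInter.1 hx 0).2
    exact hx2 (hKinfsub hx1)
  obtain ⟨n, hn⟩ := hexN
  obtain ⟨a, haA⟩ := hAne
  obtain ⟨b, hbB⟩ := hBne
  have h := hconn n U' V' hU' hV' hn ⟨a, iInter_subset K n haA.1, hAU' haA⟩
    ⟨b, iInter_subset K n hbB.1, hBV' hbB⟩
  obtain ⟨x, hx⟩ := h
  exact Set.disjoint_left.mp hUV' hx.2.1 hx.2.2


lemma aux_collar {Q : Set ℂ} {Ψ : ℂ → ℂ} (hQ : Unshielded Q) (hΨ : RiemannMap Q Ψ)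
    (hQ2 : ∃ q₁ ∈ Q, ∃ q₂ ∈ Q, q₁ ≠ q₂) :
    ∃ ρ M₁ : ℝ, 0 < ρ ∧ ρ ≤ 1/2 ∧ (∀ q ∈ Q, Complex.abs q + 1 ≤ M₁) ∧
      ∀ z : ℂ, 1 < Complex.abs z → Complex.abs z < 1 + ρ → Complex.abs (Ψ z) ≤ M₁ := by
  obtain ⟨r₀, hr₀⟩ := hQ.1.isBounded.subset_closedBall 0
  set M₀ := max r₀ 1 with hM₀
  set M₁ := M₀ + 1 with hM₁
  have hQM₀ : ∀ q ∈ Q, Complex.abs q ≤ M₀ := by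
    intro q hq
    have := hr₀ hq
    rw [mem_closedBall, Complex.dist_eq, sub_zero] at this
    exact le_trans this (le_max_left _ _)
  have hfar : {z : ℂ | M₀ < Complex.abs z} ⊆ basin Q :=
    aux_far_subset_basin Q M₀ (le_max_right _ _) hQM₀
  have hsph : ∀ w : ℂ, Complex.abs w = M₁ → w ∈ basin Q := by
    intro w hw
    apply hfar
    simp only [mem_setOf_eq, hw, hM₁]; linarith
  have hQbasin : ∀ q ∈ Q, q ∉ basin Q := by
    intro q hq
    have := aux_Q_eq Q hQ
    rw [this] at hq
    exact hq.2
  have hQclos : ∀ q ∈ Q, q ∈ closure (basin Q) := by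
    intro q hq
    have := aux_Q_eq Q hQ
    rw [this] at hq
    exact hq.1
  set U := {z : ℂ | 1 < Complex.abs z} with hU
  -- S' is bounded
  have hSbd : ∃ R : ℝ, 2 ≤ R ∧ ∀ z, z ∈ U → Complex.abs (Ψ z) = M₁ → Complex.abs z ≤ R := by
    by_contra hno
    push_neg at hno
    have hsel : ∀ n : ℕ, ∃ z, z ∈ U ∧ Complex.abs (Ψ z) = M₁ ∧ (n : ℝ) < Complex.abs z := by
      intro n
      obtain ⟨z, hz1, hz2, hz3⟩ := hno (max 2 n) (le_max_left _ _)
      exact ⟨z, hz1, hz2, lt_of_le_of_lt (by exact_mod_cast le_max_right 2 (n:ℝ)) hz3⟩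
    choose ζ hζU hζM hζn using hsel
    have hmem : ∀ n, Ψ (ζ n) ∈ sphere (0 : ℂ) M₁ := by
      intro n
      rw [mem_sphere, Complex.dist_eq, sub_zero]
      exact hζM n
    obtain ⟨w, hwsph, φ, hφ, hconv⟩ := (isCompact_sphere (0:ℂ) M₁).tendsto_subseq hmem
    have hwabs : Complex.abs w = M₁ := by
      rw [mem_sphere, Complex.dist_eq, sub_zero] at hwsph
      exact hwsph
    obtain ⟨ξ, hξU, hξw⟩ := hΨ.2.surjOn (hsph w hwabs)
    have hconv' : Tendsto (fun k => Ψ (ζ (φ k))) atTop (𝓝 (Ψ ξ)) := by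
      rw [hξw]; exact hconv
    have hzc := aux_tendsto_preimage hΨ (fun k => hζU (φ k)) hξU hconv'
    have habs : Tendsto (fun k => Complex.abs (ζ (φ k))) atTop (𝓝 (Complex.abs ξ)) :=
      (Complex.continuous_abs.tendsto ξ).comp hzc
    have hat : Tendsto (fun k => Complex.abs (ζ (φ k))) atTop atTop := by
      apply tendsto_atTop_mono (fun k => le_of_lt ?_) tendsto_natCast_atTop_atTop
      exact lt_of_le_of_lt (by exact_mod_cast hφ.le_apply) (hζn (φ k))
    exact not_tendsto_atTop_of_tendsto_nhds habs hat
  -- S' is away from the unit circle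
  have hSaway : ∃ ρ : ℝ, 0 < ρ ∧ ρ ≤ 1/2 ∧
      ∀ z, z ∈ U → Complex.abs (Ψ z) = M₁ → 1 + ρ ≤ Complex.abs z := by
    by_contra hno
    push_neg at hno
    have hsel : ∀ n : ℕ, ∃ z, z ∈ U ∧ Complex.abs (Ψ z) = M₁ ∧
        Complex.abs z < 1 + (1/2)/(n+1) := by
      intro n
      obtain ⟨z, hz1, hz2, hz3⟩ := hno ((1/2)/(n+1)) (by positivity)
        (by rw [div_le_iff₀ (by positivity)]; nlinarith [(Nat.cast_nonneg n : (0:ℝ) ≤ n)])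
      exact ⟨z, hz1, hz2, hz3⟩
    choose ζ hζU hζM hζb using hsel
    have hbd : ∀ n, ζ n ∈ closedBall (0:ℂ) 2 := by
      intro n
      rw [mem_closedBall, Complex.dist_eq, sub_zero]
      have := hζb n
      have h1 : (1/2 : ℝ)/(n+1) ≤ 1/2 := by
        rw [div_le_iff₀ (by positivity)]; nlinarith [(Nat.cast_nonneg n : (0:ℝ) ≤ n)]
      rw [Complex.norm_eq_abs]; linarith
    obtain ⟨ξ, _, φ, hφ, hconv⟩ := (isCompact_closedBall (0:ℂ) 2).tendsto_subseq hbd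
    have habsle : Complex.abs ξ ≤ 1 := by
      have h1 : Tendsto (fun k => Complex.abs (ζ (φ k))) atTop (𝓝 (Complex.abs ξ)) :=
        (Complex.continuous_abs.tendsto ξ).comp hconv
      have h2 : Tendsto (fun k : ℕ => 1 + (1/2)/((k:ℝ)+1)) atTop (𝓝 1) := by
        have h3 : Tendsto (fun k : ℕ => (1/2 : ℝ)/((k:ℝ)+1)) atTop (𝓝 0) :=
          Tendsto.div_atTop tendsto_const_nhds
            (tendsto_atTop_add_const_right _ 1 tendsto_natCast_atTop_atTop)
        simpa using tendsto_const_nhds.add h3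
      apply le_of_tendsto_of_tendsto' h1 h2
      intro k
      have := hζb (φ k)
      have hmono : (1/2 : ℝ)/((φ k : ℝ)+1) ≤ (1/2)/((k:ℝ)+1) := by
        apply div_le_div_of_nonneg_left (by norm_num) (by positivity)
        have : (k : ℝ) ≤ (φ k : ℝ) := by exact_mod_cast hφ.le_apply
        linarith
      linarith
    have hmem : ∀ k, Ψ (ζ (φ k)) ∈ sphere (0 : ℂ) M₁ := by
      intro k
      rw [mem_sphere, Complex.dist_eq, sub_zero]
      exact hζM (φ k)
    obtain ⟨w, hwsph, φ₂, hφ₂, hconv2⟩ := (isCompact_sphere (0:ℂ) M₁).tendsto_subseq hmem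
    have hwabs : Complex.abs w = M₁ := by
      rw [mem_sphere, Complex.dist_eq, sub_zero] at hwsph
      exact hwsph
    obtain ⟨ξ', hξU, hξw⟩ := hΨ.2.surjOn (hsph w hwabs)
    have hconv2' : Tendsto (fun k => Ψ (ζ (φ (φ₂ k)))) atTop (𝓝 (Ψ ξ')) := by
      rw [hξw]; exact hconv2
    have hzc := aux_tendsto_preimage hΨ (fun k => hζU (φ (φ₂ k))) hξU hconv2'
    have hzc2 : Tendsto (fun k => ζ (φ (φ₂ k))) atTop (𝓝 ξ) :=
      hconv.comp hφ₂.tendsto_atTop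
    have : ξ = ξ' := tendsto_nhds_unique hzc2 hzc
    rw [this] at habsle
    simp only [hU, mem_setOf_eq] at hξU
    rw [Complex.norm_eq_abs] at hξU
    linarith
  obtain ⟨R, hR2, hRS⟩ := hSbd
  obtain ⟨ρ, hρ0, hρ2, hρS⟩ := hSaway
  refine ⟨ρ, M₁, hρ0, hρ2, fun q hq => by have := hQM₀ q hq; linarith, ?_⟩
  by_contra hBA
  push_neg at hBA
  obtain ⟨zs, hzs1, hzs2, hzs3⟩ := hBA
  -- no value M₁ on the collar or far region
  have hNoEqΩ : ∀ z : ℂ, 1 < Complex.abs z → Complex.abs z < 1 + ρ →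
      Complex.abs (Ψ z) ≠ M₁ := by
    intro z h1 h2 heq
    have := hρS z h1 heq
    linarith
  have hNoEqW : ∀ z : ℂ, R < Complex.abs z → Complex.abs (Ψ z) ≠ M₁ := by
    intro z h1 heq
    have := hRS z (by simp only [hU, mem_setOf_eq]; linarith) heq
    linarith
  -- crossing lemma
  have hcross : ∀ s : Set ℂ, IsPreconnected s → s ⊆ U →
      (∀ z ∈ s, Complex.abs (Ψ z) ≠ M₁) → ∀ z₁ ∈ s, ∀ z₂ ∈ s,
      Complex.abs (Ψ z₁) < M₁ → M₁ < Complex.abs (Ψ z₂) → False := by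
    intro s hs hssub hne z₁ hz₁ z₂ hz₂ h₁ h₂
    have himg : IsPreconnected ((fun z => Complex.abs (Ψ z)) '' s) :=
      hs.image _ (Complex.continuous_abs.comp_continuousOn (hΨ.1.continuousOn.mono hssub))
    have hord := himg.ordConnected
    have : M₁ ∈ (fun z => Complex.abs (Ψ z)) '' s :=
      hord.out (mem_image_of_mem _ hz₁) (mem_image_of_mem _ hz₂) ⟨le_of_lt h₁, le_of_lt h₂⟩
    obtain ⟨z₃, hz₃, habs⟩ := this
    exact hne z₃ hz₃ habs
  -- the collar maps far
  have hΩfar : ∀ z : ℂ, 1 < Complex.abs z → Complex.abs z < 1 + ρ →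
      M₁ < Complex.abs (Ψ z) := by
    intro z h1 h2
    by_contra h
    have hlt : Complex.abs (Ψ z) < M₁ := lt_of_le_of_ne (not_lt.mp h) (hNoEqΩ z h1 h2)
    refine hcross {w : ℂ | 1 < Complex.abs w ∧ Complex.abs w < 1 + ρ}
      (aux_preconn_annulus 1 (1+ρ) one_pos (by linarith)) (fun w hw => hw.1)
      (fun w hw => hNoEqΩ w hw.1 hw.2) z ⟨h1, h2⟩ zs ⟨hzs1, hzs2⟩ hlt hzs3
  -- preimages of points near Q escape to infinity
  have hQseq : ∀ q ∈ Q, ∃ ζ : ℕ → ℂ, (∀ n, ζ n ∈ U) ∧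
      Tendsto (fun n => Ψ (ζ n)) atTop (𝓝 q) ∧
      Tendsto (fun n => Complex.abs (ζ n)) atTop atTop := by
    intro q hq
    obtain ⟨w, hwb, hwlim⟩ := mem_closure_iff_seq_limit.1 (hQclos q hq)
    have hsel : ∀ n, ∃ z, z ∈ U ∧ Ψ z = w n := fun n => hΨ.2.surjOn (hwb n)
    choose ζ hζU hζw using hsel
    have hΨq : Tendsto (fun n => Ψ (ζ n)) atTop (𝓝 q) := by
      simp only [hζw]; exact hwlim
    refine ⟨ζ, hζU, hΨq, ?_⟩
    have habsΨ : ∀ᶠ n in atTop, Complex.abs (Ψ (ζ n)) < M₁ := by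
      apply Filter.Tendsto.eventually_lt_const ?_
        ((Complex.continuous_abs.tendsto q).comp hΨq)
      have := hQM₀ q hq; simp only [hM₁]; linarith
    have hζρ : ∀ᶠ n in atTop, 1 + ρ ≤ Complex.abs (ζ n) := by
      refine habsΨ.mono fun n hn => ?_
      by_contra h
      push_neg at h
      have := hΩfar (ζ n) (hζU n) h
      linarith
    by_contra hnt
    rw [Filter.tendsto_atTop] at hnt
    push_neg at hnt
    obtain ⟨b, hb⟩ := hnt
    have hfreq := hb.and_eventually (hζρ.and habsΨ)
    obtain ⟨φ, hφ, hφP⟩ := Filter.extraction_of_frequently_atTop hfreq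
    have hbd : ∀ k, ζ (φ k) ∈ closedBall (0:ℂ) b := by
      intro k
      rw [mem_closedBall, Complex.dist_eq, sub_zero]
      exact le_of_lt (hφP k).1
    obtain ⟨ξ, _, φ₂, hφ₂, hconv⟩ := (isCompact_closedBall (0:ℂ) b).tendsto_subseq hbd
    have hξρ : 1 + ρ ≤ Complex.abs ξ := by
      apply ge_of_tendsto ((Complex.continuous_abs.tendsto ξ).comp hconv)
      exact Eventually.of_forall fun k => (hφP (φ₂ k)).2.1
    have hξU : ξ ∈ U := by
      simp only [hU, mem_setOf_eq]; linarith
    have hΨcont : ContinuousAt Ψ ξ :=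
      (hΨ.1.continuousOn.continuousAt ((aux_isOpen_outer 1).mem_nhds hξU))
    have h1 : Tendsto (fun k => Ψ (ζ (φ (φ₂ k)))) atTop (𝓝 (Ψ ξ)) :=
      hΨcont.tendsto.comp hconv
    have h2 : Tendsto (fun k => Ψ (ζ (φ (φ₂ k)))) atTop (𝓝 q) :=
      hΨq.comp ((hφ.comp hφ₂).tendsto_atTop)
    have : Ψ ξ = q := tendsto_nhds_unique h1 h2
    exact hQbasin q hq (this ▸ hΨ.2.mapsTo hξU)
  obtain ⟨q₁, hq₁, q₂, hq₂, hq12⟩ := hQ2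
  obtain ⟨ζ₁, hζ₁U, hζ₁Ψ, hζ₁a⟩ := hQseq q₁ hq₁
  obtain ⟨ζ₂, hζ₂U, hζ₂Ψ, hζ₂a⟩ := hQseq q₂ hq₂
  -- the far region maps into the ball of radius M₁
  have hWsmall : ∀ z : ℂ, R < Complex.abs z → Complex.abs (Ψ z) < M₁ := by
    have hev : ∀ᶠ n in atTop, R < Complex.abs (ζ₁ n) ∧ Complex.abs (Ψ (ζ₁ n)) < M₁ := by
      refine (hζ₁a.eventually_gt_atTop R).and ?_
      apply Filter.Tendsto.eventually_lt_const ?_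
        ((Complex.continuous_abs.tendsto q₁).comp hζ₁Ψ)
      have := hQM₀ q₁ hq₁; simp only [hM₁]; linarith
    obtain ⟨n₀, hn₀⟩ := hev.exists
    intro z hz
    by_contra h
    push_neg at h
    have hgt : M₁ < Complex.abs (Ψ z) := lt_of_le_of_ne h (Ne.symm (hNoEqW z hz))
    refine hcross {w : ℂ | R < Complex.abs w} (aux_preconn_outer R (by linarith))
      (fun w hw => by simp only [hU, mem_setOf_eq]; simp only [mem_setOf_eq] at hw; linarith)
      (fun w hw => hNoEqW w hw) (ζ₁ n₀) hn₀.1 z hz hn₀.2 hgt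
  -- removable singularity at infinity
  set g : ℂ → ℂ := fun w => Ψ w⁻¹ with hg
  have hRpos : (0:ℝ) < R := by linarith
  have hkey : ∀ w : ℂ, w ≠ 0 → Complex.abs w < R⁻¹ → R < Complex.abs w⁻¹ := by
    intro w hw0 hwR
    have ha : 0 < Complex.abs w := Complex.abs.pos hw0
    have hai : Complex.abs w * (Complex.abs w)⁻¹ = 1 := mul_inv_cancel₀ (ne_of_gt ha)
    have hRi : R * R⁻¹ = 1 := mul_inv_cancel₀ (ne_of_gt hRpos)
    rw [map_inv₀]
    nlinarith [inv_pos.2 ha, inv_pos.2 hRpos]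
  have hball : ∀ᶠ w in 𝓝[≠] (0:ℂ), Complex.abs w < R⁻¹ ∧ w ≠ 0 := by
    have h1 : ∀ᶠ w in 𝓝 (0:ℂ), Complex.abs w < R⁻¹ := by
      have h0 : Tendsto Complex.abs (𝓝 (0:ℂ)) (𝓝 (Complex.abs 0)) :=
        Complex.continuous_abs.tendsto 0
      simp only [map_zero] at h0
      exact h0.eventually_lt_const (by positivity)
    have h2 : ∀ᶠ w in 𝓝[≠] (0:ℂ), Complex.abs w < R⁻¹ :=
      eventually_nhdsWithin_of_eventually_nhds h1
    exact h2.and (eventually_mem_nhdsWithin.mono fun w hw => hw)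
  have hgd : ∀ᶠ w in 𝓝[≠] (0:ℂ), DifferentiableAt ℂ g w := by
    refine hball.mono ?_
    rintro w ⟨hw1, hw2⟩
    have hinvU : w⁻¹ ∈ U := by
      have := hkey w hw2 hw1
      simp only [hU, mem_setOf_eq]; linarith
    exact (hΨ.1.differentiableAt ((aux_isOpen_outer 1).mem_nhds hinvU)).comp w
      (differentiableAt_inv hw2)
  have hgb : IsBoundedUnder (· ≤ ·) (𝓝[≠] (0:ℂ)) fun w => ‖g w - g 0‖ := by
    apply isBoundedUnder_of_eventually_le (a := M₁ + ‖g 0‖)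
    refine hball.mono ?_
    rintro w ⟨hw1, hw2⟩
    have hW := hWsmall w⁻¹ (hkey w hw2 hw1)
    calc ‖g w - g 0‖ ≤ ‖g w‖ + ‖g 0‖ := norm_sub_le _ _
      _ ≤ M₁ + ‖g 0‖ := by
          have : ‖g w‖ = Complex.abs (Ψ w⁻¹) := by simp [hg, Complex.norm_eq_abs]
          rw [this]
          exact add_le_add (le_of_lt hW) le_rfl
  have htl := Complex.tendsto_limUnder_of_differentiable_on_punctured_nhds_of_bounded_under
    hgd hgb
  set L := limUnder (𝓝[≠] (0:ℂ)) g with hL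
  have hqL : ∀ q : ℂ, ∀ ζ : ℕ → ℂ, (∀ n, ζ n ∈ U) →
      Tendsto (fun n => Ψ (ζ n)) atTop (𝓝 q) →
      Tendsto (fun n => Complex.abs (ζ n)) atTop atTop → q = L := by
    intro q ζ hζU hζΨ hζa
    have hu0 : Tendsto (fun n => (ζ n)⁻¹) atTop (𝓝 (0:ℂ)) := by
      rw [tendsto_zero_iff_norm_tendsto_zero]
      have := hζa.inv_tendsto_atTop
      apply this.congr
      intro n
      simp [Complex.norm_eq_abs, map_inv₀]
    have hune : ∀ n, (ζ n)⁻¹ ∈ ({0}ᶜ : Set ℂ) := by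
      intro n
      have h1 : 1 < Complex.abs (ζ n) := hζU n
      have hne : ζ n ≠ 0 := by
        intro h; rw [h] at h1; norm_num at h1
      simp [inv_ne_zero hne]
    have hu : Tendsto (fun n => (ζ n)⁻¹) atTop (𝓝[≠] (0:ℂ)) :=
      tendsto_nhdsWithin_of_tendsto_nhds_of_eventually_within _ hu0
        (Eventually.of_forall hune)
    have hcomp : Tendsto (fun n => g ((ζ n)⁻¹)) atTop (𝓝 L) := htl.comp hu
    have heq : (fun n => g ((ζ n)⁻¹)) = fun n => Ψ (ζ n) := by
      funext n; simp only [hg]; rw [inv_inv]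
    rw [heq] at hcomp
    exact tendsto_nhds_unique hζΨ hcomp
  have e1 := hqL q₁ ζ₁ hζ₁U hζ₁Ψ hζ₁a
  have e2 := hqL q₂ ζ₂ hζ₂U hζ₂Ψ hζ₂a
  exact hq12 (e1.trans e2.symm)



lemma aux_impression_preconn {Q : Set ℂ} {Ψ : ℂ → ℂ} (hQ : Unshielded Q)
    (hΨ : RiemannMap Q Ψ) (α : AddCircle (1 : ℝ)) :
    IsPreconnected (impression Ψ α) := by
  rcases Set.subsingleton_or_nontrivial Q with hsing | hnt
  · exact (hsing.anti (aux_impression_subset hQ hΨ α)).isPreconnected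
  · obtain ⟨q₁, hq₁, q₂, hq₂, hq12⟩ := hnt
    obtain ⟨ρ, M₁, hρ0, hρ2, hQM₁, hcollar⟩ := aux_collar hQ hΨ ⟨q₁, hq₁, q₂, hq₂, hq12⟩
    set c := circlePoint α with hcdef
    have hc : Complex.abs c = 1 := Circle.abs_coe _
    set δ : ℕ → ℝ := fun n => ρ / (n + 2) with hδ
    have hδ0 : ∀ n, 0 < δ n := fun n => by positivity
    have hδρ : ∀ n, δ n < ρ := by
      intro n
      rw [hδ, div_lt_iff₀ (by positivity)]
      nlinarith [(Nat.cast_nonneg n : (0:ℝ) ≤ n)]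
    have hδhalf : ∀ n, δ n ≤ 1/2 := by
      intro n
      have : δ n < ρ := hδρ n
      linarith
    have hδanti : ∀ n, δ (n + 1) ≤ δ n := by
      intro n
      apply div_le_div_of_nonneg_left (le_of_lt hρ0) (by positivity)
      push_cast; linarith
    set A : ℕ → Set ℂ := fun n => {z : ℂ | 1 < Complex.abs z ∧ Complex.abs (z - c) < δ n}
      with hAdef
    set K : ℕ → Set ℂ := fun n => closure (Ψ '' A n) with hKdef
    have hAU : ∀ n, A n ⊆ {z : ℂ | 1 < Complex.abs z} := fun n z hz => hz.1
    have hAsmall : ∀ n, ∀ z ∈ A n, Complex.abs z < 1 + ρ := by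
      rintro n z ⟨hz1, hz2⟩
      have h3 : Complex.abs z - Complex.abs c ≤ Complex.abs (z - c) := by
        have h4 := norm_sub_norm_le z c
        simpa [Complex.norm_eq_abs] using h4
      rw [hc] at h3
      have := hδρ n
      linarith
    have hKcomp : ∀ n, IsCompact (K n) := by
      intro n
      apply (isCompact_closedBall (0:ℂ) M₁).of_isClosed_subset isClosed_closure
      apply closure_minimal ?_ Metric.isClosed_closedBall
      rintro _ ⟨z, hz, rfl⟩
      rw [mem_closedBall, Complex.dist_eq, sub_zero]
      exact hcollar z hz.1 (hAsmall n z hz)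
    have hAne : ∀ n, (A n).Nonempty := by
      intro n
      refine ⟨((1 + δ n / 2 : ℝ) : ℂ) * c, ?_, ?_⟩
      · simp only [mem_setOf_eq, map_mul, Complex.abs_ofReal, hc, mul_one]
        rw [abs_of_pos (by nlinarith [hδ0 n])]
        nlinarith [hδ0 n]
      · have heq : ((1 + δ n / 2 : ℝ) : ℂ) * c - c = ((δ n / 2 : ℝ) : ℂ) * c := by
          push_cast; ring
        rw [heq, map_mul, Complex.abs_ofReal, hc, mul_one,
          abs_of_pos (by nlinarith [hδ0 n])]
        nlinarith [hδ0 n]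
    have hKne : ∀ n, (K n).Nonempty := by
      intro n
      obtain ⟨z, hz⟩ := hAne n
      exact ⟨Ψ z, subset_closure ⟨z, hz, rfl⟩⟩
    have hAdec : ∀ n, A (n + 1) ⊆ A n := by
      rintro n z ⟨hz1, hz2⟩
      exact ⟨hz1, lt_of_lt_of_le hz2 (hδanti n)⟩
    have hKdec : ∀ n, K (n + 1) ⊆ K n :=
      fun n => closure_mono (image_mono (hAdec n))
    have hKconn : ∀ n, IsPreconnected (K n) := by
      intro n
      apply IsPreconnected.closure
      exact (aux_A_preconn c hc (δ n) (hδ0 n) (hδhalf n)).image _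
        (hΨ.1.continuousOn.mono (hAU n))
    have hδlim : Tendsto δ atTop (𝓝 0) := by
      apply Tendsto.div_atTop tendsto_const_nhds
      exact tendsto_atTop_add_const_right _ 2 tendsto_natCast_atTop_atTop
    -- the impression equals the nested intersection
    have himp : impression Ψ α = ⋂ n, K n := by
      ext w
      constructor
      · rintro ⟨z, hz1, hz2, hz3⟩
        rw [mem_iInter]
        intro n
        have hev : ∀ᶠ k in atTop, z k ∈ A n := by
          have hd : ∀ᶠ k in atTop, dist (z k) c < δ n := by
            rw [Metric.tendsto_atTop] at hz2
            obtain ⟨N, hN⟩ := hz2 (δ n) (hδ0 n)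
            exact eventually_atTop.2 ⟨N, hN⟩
          refine hd.mono fun k hk => ⟨hz1 k, ?_⟩
          rw [Complex.dist_eq] at hk
          exact hk
        have hev2 : ∀ᶠ k in atTop, Ψ (z k) ∈ Ψ '' A n :=
          hev.mono fun k hk => mem_image_of_mem _ hk
        exact mem_closure_of_tendsto hz3 hev2
      · intro hw
        rw [mem_iInter] at hw
        have hsel : ∀ n : ℕ, ∃ v, v ∈ Ψ '' A n ∧ dist w v < δ n := by
          intro n
          exact Metric.mem_closure_iff.1 (hw n) (δ n) (hδ0 n)
        choose v hv hvd using hsel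
        have hsel2 : ∀ n : ℕ, ∃ z, z ∈ A n ∧ Ψ z = v n := fun n => hv n
        choose z hzA hzv using hsel2
        refine ⟨z, fun n => (hzA n).1, ?_, ?_⟩
        · rw [tendsto_iff_dist_tendsto_zero]
          apply squeeze_zero (fun n => dist_nonneg) (fun n => ?_) hδlim
          have := (hzA n).2
          rw [Complex.dist_eq]
          exact le_of_lt this
        · rw [tendsto_iff_dist_tendsto_zero]
          apply squeeze_zero (fun n => dist_nonneg) (fun n => ?_) hδlim
          rw [dist_comm, hzv n]
          exact le_of_lt (hvd n)
    rw [himp]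
    exact aux_nested_preconn K hKdec hKcomp hKne hKconn



def auxE (Q : Set ℂ) (Ψ : ℂ → ℂ) (x y : ℂ) : Prop :=
  x ∈ Q ∧ y ∈ Q ∧ ∀ P, IsUSCImpPartition Q Ψ P → ∀ D ∈ P, (x ∈ D ↔ y ∈ D)

def auxC (Q : Set ℂ) (Ψ : ℂ → ℂ) (x : ℂ) : Set ℂ := {y | auxE Q Ψ x y}

def auxD (Q : Set ℂ) (Ψ : ℂ → ℂ) (x : ℂ) : Set ℂ :=
  connectedComponentIn (auxC Q Ψ x) x

lemma aux_part_iff {Q : Set ℂ} {Ψ : ℂ → ℂ} {P : Set (Set ℂ)}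
    (hP : IsUSCImpPartition Q Ψ P) {a b : ℂ} (ha : a ∈ Q) :
    (∀ D ∈ P, (a ∈ D ↔ b ∈ D)) ↔ ∃ D ∈ P, a ∈ D ∧ b ∈ D := by
  constructor
  · intro h
    have : a ∈ ⋃₀ P := hP.2.1.symm ▸ ha
    obtain ⟨D, hD, haD⟩ := this
    exact ⟨D, hD, haD, (h D hD).1 haD⟩
  · rintro ⟨D₀, hD₀, haD₀, hbD₀⟩ D hD
    constructor
    · intro haD
      have : D = D₀ := by
        by_contra hne
        exact absurd (Set.disjoint_left.1 (hP.2.2.1 D hD D₀ hD₀ hne) haD) (not_not.2 haD₀)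
      rw [this]; exact hbD₀
    · intro hbD
      have : D = D₀ := by
        by_contra hne
        exact absurd (Set.disjoint_left.1 (hP.2.2.1 D hD D₀ hD₀ hne) hbD) (not_not.2 hbD₀)
      rw [this]; exact haD₀

lemma aux_graph_closed (Q : Set ℂ) (Ψ : ℂ → ℂ) (hQc : IsCompact Q) :
    IsClosed {p : ℂ × ℂ | auxE Q Ψ p.1 p.2} := by
  haveI : CompactSpace ↥Q := isCompact_iff_compactSpace.mp hQc
  have heq : {p : ℂ × ℂ | auxE Q Ψ p.1 p.2} =
      (Q ×ˢ Q) ∩ ⋂ (P : {P : Set (Set ℂ) // IsUSCImpPartition Q Ψ P}),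
        ((fun q : ↥Q × ↥Q => ((q.1 : ℂ), (q.2 : ℂ))) ''
          {q : ↥Q × ↥Q | ∃ D ∈ P.1, (q.1 : ℂ) ∈ D ∧ (q.2 : ℂ) ∈ D}) := by
    ext p
    simp only [mem_inter_iff, mem_prod, mem_iInter, mem_setOf_eq]
    constructor
    · rintro ⟨h1, h2, h3⟩
      refine ⟨⟨h1, h2⟩, fun P => ?_⟩
      obtain ⟨D, hD, haD, hbD⟩ := (aux_part_iff P.2 h1).1 (h3 P.1 P.2)
      exact ⟨(⟨p.1, h1⟩, ⟨p.2, h2⟩), ⟨D, hD, haD, hbD⟩, rfl⟩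
    · rintro ⟨⟨h1, h2⟩, h3⟩
      refine ⟨h1, h2, fun P hP => ?_⟩
      obtain ⟨q, hq, hqeq⟩ := h3 ⟨P, hP⟩
      have e1 : (q.1 : ℂ) = p.1 := congrArg Prod.fst hqeq
      have e2 : (q.2 : ℂ) = p.2 := congrArg Prod.snd hqeq
      apply (aux_part_iff hP h1).2
      obtain ⟨D, hD, hD1, hD2⟩ := hq
      exact ⟨D, hD, e1 ▸ hD1, e2 ▸ hD2⟩
  rw [heq]
  apply IsClosed.inter (hQc.isClosed.prod hQc.isClosed)
  apply isClosed_iInter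
  intro P
  have hcl : IsClosed {q : ↥Q × ↥Q | ∃ D ∈ P.1, (q.1 : ℂ) ∈ D ∧ (q.2 : ℂ) ∈ D} :=
    P.2.2.2.2.1
  have hcomp : IsCompact {q : ↥Q × ↥Q | ∃ D ∈ P.1, (q.1 : ℂ) ∈ D ∧ (q.2 : ℂ) ∈ D} :=
    hcl.isCompact
  have hcont : Continuous (fun q : ↥Q × ↥Q => ((q.1 : ℂ), (q.2 : ℂ))) :=
    (continuous_subtype_val.comp continuous_fst).prodMk
      (continuous_subtype_val.comp continuous_snd)
  exact (hcomp.image hcont).isClosed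



section AuxProps

variable {Q : Set ℂ} {Ψ : ℂ → ℂ}

lemma auxE_refl {x : ℂ} (hx : x ∈ Q) : auxE Q Ψ x x :=
  ⟨hx, hx, fun _ _ _ _ => Iff.rfl⟩

lemma auxE_symm {x y : ℂ} (h : auxE Q Ψ x y) : auxE Q Ψ y x :=
  ⟨h.2.1, h.1, fun P hP D hD => (h.2.2 P hP D hD).symm⟩

lemma auxE_trans {x y z : ℂ} (h1 : auxE Q Ψ x y) (h2 : auxE Q Ψ y z) : auxE Q Ψ x z :=
  ⟨h1.1, h2.2.1, fun P hP D hD => (h1.2.2 P hP D hD).trans (h2.2.2 P hP D hD)⟩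

lemma auxC_subset (x : ℂ) : auxC Q Ψ x ⊆ Q := fun _ hy => hy.2.1

lemma mem_auxC_self {x : ℂ} (hx : x ∈ Q) : x ∈ auxC Q Ψ x := auxE_refl hx

lemma auxC_closed (hQc : IsCompact Q) (x : ℂ) : IsClosed (auxC Q Ψ x) := by
  have : auxC Q Ψ x = (fun y => (x, y)) ⁻¹' {p : ℂ × ℂ | auxE Q Ψ p.1 p.2} := rfl
  rw [this]
  exact (aux_graph_closed Q Ψ hQc).preimage (Continuous.prodMk_right x)

lemma auxC_compact (hQc : IsCompact Q) (x : ℂ) : IsCompact (auxC Q Ψ x) :=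
  hQc.of_isClosed_subset (auxC_closed hQc x) (auxC_subset x)

lemma auxC_eq {x y : ℂ} (hy : y ∈ auxC Q Ψ x) : auxC Q Ψ y = auxC Q Ψ x := by
  ext w
  exact ⟨fun hw => auxE_trans hy hw, fun hw => auxE_trans (auxE_symm hy) hw⟩

lemma mem_auxD_self {x : ℂ} (hx : x ∈ Q) : x ∈ auxD Q Ψ x :=
  mem_connectedComponentIn (mem_auxC_self hx)

lemma auxD_subset_auxC (x : ℂ) : auxD Q Ψ x ⊆ auxC Q Ψ x :=
  connectedComponentIn_subset _ _

lemma auxD_subset_Q (x : ℂ) : auxD Q Ψ x ⊆ Q :=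
  (auxD_subset_auxC x).trans (auxC_subset x)

lemma auxD_eq {x y : ℂ} (hy : y ∈ auxD Q Ψ x) (hx : x ∈ Q) :
    auxD Q Ψ y = auxD Q Ψ x := by
  have h1 : auxC Q Ψ y = auxC Q Ψ x := auxC_eq (auxD_subset_auxC x hy)
  rw [auxD, h1, auxD, ← connectedComponentIn_eq hy]

lemma auxD_closed (hQc : IsCompact Q) {x : ℂ} (hx : x ∈ Q) :
    IsClosed (auxD Q Ψ x) ∧ IsCompact (auxD Q Ψ x) := by
  haveI : CompactSpace ↥(auxC Q Ψ x) := isCompact_iff_compactSpace.mp (auxC_compact hQc x)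
  rw [auxD, connectedComponentIn_eq_image (mem_auxC_self hx)]
  have hcomp : IsCompact (Subtype.val ''
      connectedComponent (⟨x, mem_auxC_self hx⟩ : ↥(auxC Q Ψ x))) :=
    (isClosed_connectedComponent.isCompact).image continuous_subtype_val
  exact ⟨hcomp.isClosed, hcomp⟩

lemma auxD_conn {x : ℂ} (hx : x ∈ Q) : IsConnected (auxD Q Ψ x) :=
  ⟨⟨x, mem_auxD_self hx⟩, isPreconnected_connectedComponentIn⟩

lemma aux_mem_iff {a b : ℂ} :
    (∃ D ∈ {D : Set ℂ | ∃ x ∈ Q, D = auxD Q Ψ x}, a ∈ D ∧ b ∈ D) ↔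
      a ∈ Q ∧ b ∈ auxD Q Ψ a := by
  constructor
  · rintro ⟨D, ⟨x, hx, rfl⟩, haD, hbD⟩
    have haQ : a ∈ Q := auxD_subset_Q x haD
    have : auxD Q Ψ a = auxD Q Ψ x := auxD_eq haD hx
    exact ⟨haQ, this ▸ hbD⟩
  · rintro ⟨ha, hb⟩
    exact ⟨auxD Q Ψ a, ⟨a, ha, rfl⟩, mem_auxD_self ha, hb⟩

end AuxProps



lemma aux_usc (Q : Set ℂ) (Ψ : ℂ → ℂ) (hQc : IsCompact Q) :
    IsClosed {p : ↥Q × ↥Q | ∃ D ∈ {D : Set ℂ | ∃ x ∈ Q, D = auxD Q Ψ x},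
      (p.1 : ℂ) ∈ D ∧ (p.2 : ℂ) ∈ D} := by
  haveI : CompactSpace ↥Q := isCompact_iff_compactSpace.mp hQc
  apply IsSeqClosed.isClosed
  intro p p₀ hp hlim
  set x : ℕ → ℂ := fun n => ((p n).1 : ℂ) with hxdef
  set y : ℕ → ℂ := fun n => ((p n).2 : ℂ) with hydef
  set xLim : ℂ := (p₀.1 : ℂ) with hxLdef
  set yLim : ℂ := (p₀.2 : ℂ) with hyLdef
  have hx : Tendsto x atTop (𝓝 xLim) :=
    ((continuous_subtype_val.comp continuous_fst).tendsto p₀).comp hlim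
  have hy : Tendsto y atTop (𝓝 yLim) :=
    ((continuous_subtype_val.comp continuous_snd).tendsto p₀).comp hlim
  have hxQ : ∀ n, x n ∈ Q := fun n => ((p n).1).2
  have hmem : ∀ n, x n ∈ Q ∧ y n ∈ auxD Q Ψ (x n) := fun n => aux_mem_iff.1 (hp n)
  have hx8Q : xLim ∈ Q := (p₀.1).2
  rw [mem_setOf_eq, aux_mem_iff]
  refine ⟨hx8Q, ?_⟩
  -- the upper topological limit of the components
  set Ls : Set ℂ := ⋂ N : ℕ, closure (⋃ k, ⋃ (_ : N ≤ k), auxD Q Ψ (x k)) with hLsdef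
  have hLsclosed : IsClosed Ls := isClosed_iInter fun _ => isClosed_closure
  have hLssub : Ls ⊆ auxC Q Ψ xLim := by
    intro w hw
    rw [hLsdef, mem_iInter] at hw
    have hsel : ∀ N : ℕ, ∃ v, (∃ k, N ≤ k ∧ v ∈ auxD Q Ψ (x k)) ∧ dist w v < 1/(N+1) := by
      intro N
      obtain ⟨v, hv1, hv2⟩ := Metric.mem_closure_iff.1 (hw N) (1/(N+1)) (by positivity)
      simp only [mem_iUnion] at hv1
      obtain ⟨k, hk, hvk⟩ := hv1
      exact ⟨v, ⟨k, hk, hvk⟩, hv2⟩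
    choose v hv hvd using hsel
    choose k hk hvk using hv
    have hktop : Tendsto k atTop atTop := tendsto_atTop_mono hk tendsto_id
    have hxk : Tendsto (fun N => x (k N)) atTop (𝓝 xLim) := hx.comp hktop
    have hvw : Tendsto v atTop (𝓝 w) := by
      rw [tendsto_iff_dist_tendsto_zero]
      apply squeeze_zero (fun n => dist_nonneg) (fun n => le_of_lt (by
        rw [dist_comm]; exact hvd n))
      have : Tendsto (fun N : ℕ => 1/((N:ℝ)+1)) atTop (𝓝 0) :=
        Tendsto.div_atTop tendsto_const_nhds
          (tendsto_atTop_add_const_right _ 1 tendsto_natCast_atTop_atTop)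
      exact this
    have hpair : Tendsto (fun N => (x (k N), v N)) atTop (𝓝 (xLim, w)) :=
      hxk.prodMk_nhds hvw
    have hEmem : ∀ N, (x (k N), v N) ∈ {q : ℂ × ℂ | auxE Q Ψ q.1 q.2} := by
      intro N
      exact auxD_subset_auxC (x (k N)) (hvk N)
    exact (aux_graph_closed Q Ψ hQc).mem_of_tendsto hpair (Eventually.of_forall hEmem)
  have hLscompact : IsCompact Ls :=
    (auxC_compact hQc xLim).of_isClosed_subset hLsclosed hLssub
  have hx8Ls : xLim ∈ Ls := by
    rw [hLsdef, mem_iInter]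
    intro N
    apply mem_closure_of_tendsto (hx.comp (tendsto_add_atTop_nat N))
    apply Eventually.of_forall
    intro j
    simp only [mem_iUnion]
    exact ⟨j + N, Nat.le_add_left N j, mem_auxD_self (hxQ (j + N))⟩
  have hy8Ls : yLim ∈ Ls := by
    rw [hLsdef, mem_iInter]
    intro N
    apply mem_closure_of_tendsto (hy.comp (tendsto_add_atTop_nat N))
    apply Eventually.of_forall
    intro j
    simp only [mem_iUnion]
    exact ⟨j + N, Nat.le_add_left N j, (hmem (j + N)).2⟩
  -- Ls is preconnected
  have hLspc : IsPreconnected Ls := by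
    by_contra hnc
    rw [IsPreconnected] at hnc
    push_neg at hnc
    obtain ⟨U, V, hU, hV, hsub, hne1, hne2, hUV⟩ := hnc
    set A := Ls \ V with hAdef
    set B := Ls \ U with hBdef
    have hAc : IsCompact A :=
      hLscompact.of_isClosed_subset (hLsclosed.inter hV.isClosed_compl) (fun z hz => hz.1)
    have hBc : IsCompact B :=
      hLscompact.of_isClosed_subset (hLsclosed.inter hU.isClosed_compl) (fun z hz => hz.1)
    have hABdisj : Disjoint A B := by
      rw [disjoint_iff_inter_eq_empty]
      ext w; simp only [mem_inter_iff, mem_empty_iff_false, iff_false]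
      rintro ⟨⟨hw1, hw2⟩, ⟨_, hw4⟩⟩
      rcases hsub hw1 with h | h
      exacts [hw4 h, hw2 h]
    have hAne : A.Nonempty := by
      obtain ⟨w, hw1, hw2⟩ := hne1
      refine ⟨w, hw1, fun hwV => ?_⟩
      have : w ∈ Ls ∩ (U ∩ V) := ⟨hw1, hw2, hwV⟩
      rw [hUV] at this; exact this
    have hBne : B.Nonempty := by
      obtain ⟨w, hw1, hw2⟩ := hne2
      refine ⟨w, hw1, fun hwU => ?_⟩
      have : w ∈ Ls ∩ (U ∩ V) := ⟨hw1, hwU, hw2⟩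
      rw [hUV] at this; exact this
    obtain ⟨U', V', hU', hV', hAU', hBV', hUV'⟩ :=
      SeparatedNhds.of_isCompact_isCompact hAc hBc hABdisj
    have hLsUV : Ls ⊆ U' ∪ V' := by
      intro w hw
      by_cases hwV : w ∈ V
      · have hwU : w ∉ U := fun hwU => by
          have : w ∈ Ls ∩ (U ∩ V) := ⟨hw, hwU, hwV⟩
          rw [hUV] at this; exact this
        exact Or.inr (hBV' ⟨hw, hwU⟩)
      · exact Or.inl (hAU' ⟨hw, hwV⟩)
    -- eventually all components are inside U' ∪ V'
    have hexN : ∃ N : ℕ, ∀ k, N ≤ k → auxD Q Ψ (x k) ⊆ U' ∪ V' := by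
      by_contra hno
      push_neg at hno
      have hsel : ∀ N : ℕ, ∃ k, N ≤ k ∧ ∃ z, z ∈ auxD Q Ψ (x k) ∧ z ∉ U' ∪ V' := by
        intro N
        obtain ⟨k, hk1, hk2⟩ := hno N
        obtain ⟨z, hz1, hz2⟩ := Set.not_subset.mp hk2
        exact ⟨k, hk1, z, hz1, hz2⟩
      choose k' hk' z' hz'D hz'no using hsel
      have hz'Q : ∀ N, z' N ∈ Q := fun N => auxD_subset_Q (x (k' N)) (hz'D N)
      obtain ⟨zLim, hzLimQ, φ, hφ, hconv⟩ := hQc.tendsto_subseq hz'Q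
      have hzLimLs : zLim ∈ Ls := by
        rw [hLsdef, mem_iInter]
        intro M
        apply mem_closure_of_tendsto hconv
        rw [eventually_atTop]
        refine ⟨M, fun j hj => ?_⟩
        simp only [mem_iUnion]
        exact ⟨k' (φ j), le_trans (le_trans hj hφ.le_apply) (hk' (φ j)), hz'D (φ j)⟩
      have hzLimno : zLim ∉ U' ∪ V' := by
        have hcl : IsClosed ((U' ∪ V')ᶜ) := (hU'.union hV').isClosed_compl
        exact hcl.mem_of_tendsto hconv (Eventually.of_forall fun j => hz'no (φ j))
      exact hzLimno (hLsUV hzLimLs)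
    obtain ⟨N, hN⟩ := hexN
    -- generic contradiction
    have key : ∀ U₁ V₁ : Set ℂ, IsOpen U₁ → IsOpen V₁ → Disjoint U₁ V₁ →
        (∀ k, N ≤ k → auxD Q Ψ (x k) ⊆ U₁ ∪ V₁) → xLim ∈ U₁ →
        ∀ w ∈ Ls, w ∈ V₁ → False := by
      intro U₁ V₁ hU₁ hV₁ hd₁ hsub₁ hxLimU₁ w hwLs hwV₁
      have hev : ∀ᶠ n in atTop, x n ∈ U₁ := hx.eventually (hU₁.mem_nhds hxLimU₁)
      rw [eventually_atTop] at hev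
      obtain ⟨N₂, hN₂⟩ := hev
      have hwcl : w ∈ closure (⋃ k, ⋃ (_ : max N N₂ ≤ k), auxD Q Ψ (x k)) := by
        rw [hLsdef, mem_iInter] at hwLs
        exact hwLs (max N N₂)
      obtain ⟨v, hvV₁, hvU⟩ := _root_.mem_closure_iff.1 hwcl V₁ hV₁ hwV₁
      simp only [mem_iUnion] at hvU
      obtain ⟨k₂, hk₂, hvD⟩ := hvU
      have hk₂N : N ≤ k₂ := le_trans (le_max_left _ _) hk₂
      have hk₂N₂ : N₂ ≤ k₂ := le_trans (le_max_right _ _) hk₂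
      have hDsub : auxD Q Ψ (x k₂) ⊆ U₁ ∪ V₁ := hsub₁ k₂ hk₂N
      have hconn : IsPreconnected (auxD Q Ψ (x k₂)) := isPreconnected_connectedComponentIn
      obtain ⟨z, hz⟩ := hconn U₁ V₁ hU₁ hV₁ hDsub
        ⟨x k₂, mem_auxD_self (hxQ k₂), hN₂ k₂ hk₂N₂⟩ ⟨v, hvD, hvV₁⟩
      exact Set.disjoint_left.mp hd₁ hz.2.1 hz.2.2
    rcases hLsUV hx8Ls with hxU' | hxV'
    · obtain ⟨b, hbB⟩ := hBne
      exact key U' V' hU' hV' hUV' hN hxU' b hbB.1 (hBV' hbB)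
    · obtain ⟨a, haA⟩ := hAne
      refine key V' U' hV' hU' hUV'.symm (fun k hk z hz => ?_) hxV' a haA.1 (hAU' haA)
      rcases hN k hk hz with h | h
      exacts [Or.inr h, Or.inl h]
  have := hLspc.subset_connectedComponentIn hx8Ls hLssub
  exact this hy8Ls

/-- There is a finest upper semi-continuous partition of an unshielded continuum `Q`
whose elements are unions of impressions; moreover its elements are closed and
connected. -/
theorem exists_finest_usc_partition (Q : Set ℂ) (hQ : Unshielded Q)
    (Ψ : ℂ → ℂ) (hΨ : RiemannMap Q Ψ) :
    ∃ 𝒟 : Set (Set ℂ),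
      IsUSCImpPartition Q Ψ 𝒟 ∧
      (∀ D ∈ 𝒟, IsClosed D ∧ IsConnected D) ∧
      ∀ 𝒟' : Set (Set ℂ), IsUSCImpPartition Q Ψ 𝒟' →
        ∀ D ∈ 𝒟, ∃ D' ∈ 𝒟', D ⊆ D' := by
  have hQc := hQ.1
  have hQne : Q.Nonempty := hQ.2.1.1
  have himpQ : ∀ α, impression Ψ α ⊆ Q := aux_impression_subset hQ hΨ
  have himpC : ∀ α, IsPreconnected (impression Ψ α) := aux_impression_preconn hQ hΨ
  refine ⟨{D | ∃ x ∈ Q, D = auxD Q Ψ x}, ⟨?_, ?_, ?_, aux_usc Q Ψ hQc, ?_⟩, ?_, ?_⟩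
  · rintro D ⟨x, hx, rfl⟩
    exact ⟨⟨x, mem_auxD_self hx⟩, auxD_subset_Q x⟩
  · apply subset_antisymm
    · rintro z ⟨D, ⟨x, hx, rfl⟩, hzD⟩
      exact auxD_subset_Q x hzD
    · intro z hz
      exact ⟨auxD Q Ψ z, ⟨z, hz, rfl⟩, mem_auxD_self hz⟩
  · rintro D₁ ⟨x₁, hx₁, rfl⟩ D₂ ⟨x₂, hx₂, rfl⟩ hne
    by_contra h
    obtain ⟨z, hz1, hz2⟩ := Set.not_disjoint_iff.1 h
    exact hne ((auxD_eq hz1 hx₁).symm.trans (auxD_eq hz2 hx₂))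
  · intro α
    rcases (impression Ψ α).eq_empty_or_nonempty with hemp | ⟨x, hx⟩
    · obtain ⟨x₀, hx₀⟩ := hQne
      exact ⟨auxD Q Ψ x₀, ⟨x₀, hx₀, rfl⟩, by rw [hemp]; exact empty_subset _⟩
    · have hxQ : x ∈ Q := himpQ α hx
      have hsubC : impression Ψ α ⊆ auxC Q Ψ x := by
        intro w hw
        refine ⟨hxQ, himpQ α hw, fun P hP D hD => ?_⟩
        obtain ⟨D₀, hD₀, hsub₀⟩ := hP.2.2.2.2 α
        exact (aux_part_iff hP hxQ).2 ⟨D₀, hD₀, hsub₀ hx, hsub₀ hw⟩ D hD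
      exact ⟨auxD Q Ψ x, ⟨x, hxQ, rfl⟩,
        (himpC α).subset_connectedComponentIn hx hsubC⟩
  · rintro D ⟨x, hx, rfl⟩
    exact ⟨(auxD_closed hQc hx).1, auxD_conn hx⟩
  · rintro 𝒟' hP' D ⟨x, hx, rfl⟩
    have hxcup : x ∈ ⋃₀ 𝒟' := by rw [hP'.2.1]; exact hx
    obtain ⟨D', hD', hxD'⟩ := hxcup
    refine ⟨D', hD', fun y hy => ?_⟩
    have hE := auxD_subset_auxC x hy
    exact (hE.2.2 𝒟' hP' D' hD').mp hxD'


end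
end

section
/- Let Q ⊆ ℂ be an unshielded continuum and Ψ a Riemann map for its basin of infinity as in the context. Suppose m : Q → Y is a monotone continuous surjection onto a compact metric space Y such that m(Imp(α)) is a single point for every angle α ∈ ℝ/ℤ. Then Y is locally connected, and the map Φ_m : ℝ/ℤ → Y that sends α to the unique point of m(Imp(α)) is a continuous surjection. -/
open Set Filter Topology Metric

noncomputable section


lemma continuous_circlePoint : Continuous circlePoint :=
  continuous_subtype_val.comp AddCircle.continuous_toCircle

lemma lc_of_quotient {X Y : Type*} [TopologicalSpace X] [TopologicalSpace Y]
    [LocallyConnectedSpace X] {f : X → Y} (hf : IsQuotientMap f) : LocallyConnectedSpace Y := by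
  rw [locallyConnectedSpace_iff_connectedComponentIn_open]
  intro V hV y hy
  rw [← hf.isOpen_preimage, isOpen_iff_mem_nhds]
  intro x hx
  have hfx : f x ∈ V := connectedComponentIn_subset _ _ hx
  have hxV : x ∈ f ⁻¹' V := hfx
  have hopen : IsOpen (connectedComponentIn (f ⁻¹' V) x) :=
    (hV.preimage hf.continuous).connectedComponentIn
  refine mem_nhds_iff.mpr ⟨connectedComponentIn (f ⁻¹' V) x, ?_,
    hopen, mem_connectedComponentIn hxV⟩
  intro x' hx'
  have himg : f '' connectedComponentIn (f ⁻¹' V) x ⊆ connectedComponentIn V (f x) :=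
    (isPreconnected_connectedComponentIn.image _ hf.continuous.continuousOn).subset_connectedComponentIn
      (mem_image_of_mem _ (mem_connectedComponentIn hxV))
      (by rintro - ⟨u, hu, rfl⟩; exact connectedComponentIn_subset (f ⁻¹' V) x hu)
  have h2 : f x' ∈ connectedComponentIn V (f x) := himg (mem_image_of_mem _ hx')
  have h3 : connectedComponentIn V y = connectedComponentIn V (f x) :=
    connectedComponentIn_eq hx
  rw [mem_preimage, h3]; exact h2

instance : LocallyConnectedSpace (AddCircle (1:ℝ)) :=
  lc_of_quotient (QuotientAddGroup.isQuotientMap_mk _)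

lemma impression_usc (Ψ : ℂ → ℂ) {α : ℕ → AddCircle (1:ℝ)} {a : AddCircle (1:ℝ)}
    (hα : Tendsto α atTop (𝓝 a)) {q : ℕ → ℂ} {w : ℂ}
    (hq : ∀ k, q k ∈ impression Ψ (α k)) (hqw : Tendsto q atTop (𝓝 w)) :
    w ∈ impression Ψ a := by
  choose z hz1 hz2 hz3 using hq
  have hsel : ∀ k : ℕ, ∃ n, dist (z k n) (circlePoint (α k)) < 1/(k+1) ∧
      dist (Ψ (z k n)) (q k) < 1/(k+1) := by
    intro k
    obtain ⟨n1, hn1⟩ := (Metric.tendsto_atTop.mp (hz2 k)) (1/(k+1)) (by positivity)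
    obtain ⟨n2, hn2⟩ := (Metric.tendsto_atTop.mp (hz3 k)) (1/(k+1)) (by positivity)
    exact ⟨max n1 n2, hn1 _ (le_max_left _ _), hn2 _ (le_max_right _ _)⟩
  choose n hn1 hn2 using hsel
  have hinv : Tendsto (fun k : ℕ => 1/((k:ℝ)+1)) atTop (𝓝 0) :=
    tendsto_one_div_add_atTop_nhds_zero_nat
  have hc : Tendsto (fun k => circlePoint (α k)) atTop (𝓝 (circlePoint a)) :=
    (continuous_circlePoint.tendsto _).comp hα
  refine ⟨fun k => z k (n k), fun k => hz1 k (n k), ?_, ?_⟩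
  · rw [tendsto_iff_dist_tendsto_zero]
    refine squeeze_zero (fun k => dist_nonneg)
      (g := fun k : ℕ => 1/((k:ℝ)+1) + dist (circlePoint (α k)) (circlePoint a))
      (fun k => (dist_triangle (z k (n k)) (circlePoint (α k)) (circlePoint a)).trans (add_le_add (hn1 k).le le_rfl)) ?_
    simpa using hinv.add (tendsto_iff_dist_tendsto_zero.mp hc)
  · rw [tendsto_iff_dist_tendsto_zero]
    refine squeeze_zero (fun k => dist_nonneg)
      (g := fun k : ℕ => 1/((k:ℝ)+1) + dist (q k) w)
      (fun k => (dist_triangle (Ψ (z k (n k))) (q k) w).trans (add_le_add (hn2 k).le le_rfl)) ?_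
    simpa using hinv.add (tendsto_iff_dist_tendsto_zero.mp hqw)

lemma exists_circlePoint {z : ℂ} (h : ‖z‖ = 1) : ∃ α, circlePoint α = z := by
  have hz : z ∈ Metric.sphere (0:ℂ) 1 := by
    simpa using h
  refine ⟨(AddCircle.homeomorphCircle (one_ne_zero)).symm ⟨z, hz⟩, ?_⟩
  have := AddCircle.homeomorphCircle_apply (T := (1:ℝ)) one_ne_zero
    ((AddCircle.homeomorphCircle one_ne_zero).symm ⟨z, hz⟩)
  erw [Homeomorph.apply_symm_apply] at this
  simp [circlePoint, ← this]

lemma isOpen_basin {Q : Set ℂ} (hQ : IsCompact Q) : IsOpen (basin Q) := by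
  rw [isOpen_iff_mem_nhds]; intro z hz
  have hQc : IsOpen Qᶜ := hQ.isClosed.isOpen_compl
  refine mem_nhds_iff.mpr ⟨connectedComponentIn Qᶜ z, ?_, hQc.connectedComponentIn,
    mem_connectedComponentIn hz.1⟩
  intro y hy
  refine ⟨connectedComponentIn_subset Qᶜ z hy, ?_⟩
  rw [← connectedComponentIn_eq hy]; exact hz.2

lemma subset_unionImpression {Q : Set ℂ} {Ψ : ℂ → ℂ} (hQ : Unshielded Q) (hΨ : RiemannMap Q Ψ)
    (hne : ∃ q ∈ Q, q ∈ impression Ψ 0) :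
    ∀ w ∈ Q, ∃ α, w ∈ impression Ψ α := by
  intro w hwQ
  set O : Set ℂ := {z | 1 < ‖z‖} with hO_def
  have hO : IsOpen O := isOpen_lt continuous_const continuous_norm
  have hbo : IsOpen (basin Q) := isOpen_basin hQ.1
  have hwf : w ∈ frontier (basin Q) := hQ.2.2 ▸ hwQ
  have hw_cl : w ∈ closure (basin Q) := frontier_subset_closure hwf
  have hw_not : w ∉ basin Q := by
    rw [hbo.frontier_eq] at hwf; exact hwf.2
  obtain ⟨zs, hzs_mem, hzs_tend⟩ := mem_closure_iff_seq_limit.mp hw_cl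
  have hex : ∀ n, ∃ x, x ∈ O ∧ Ψ x = zs n := fun n => hΨ.2.surjOn (hzs_mem n)
  choose ζ hζO hζΨ using hex
  by_cases hbdd : ∃ M : ℝ, ∃ᶠ n in atTop, ‖ζ n‖ ≤ M
  · -- bounded subsequence
    obtain ⟨M, hM⟩ := hbdd
    obtain ⟨φ, hφmono, hφ⟩ := extraction_of_frequently_atTop hM
    have hmem : ∀ k, ζ (φ k) ∈ closedBall (0:ℂ) M := fun k => by
      simpa [mem_closedBall, Complex.dist_eq] using hφ k
    obtain ⟨c0, _, ψ, hψmono, hψtend⟩ := (isCompact_closedBall (0:ℂ) M).tendsto_subseq hmem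
    have habs : Tendsto (fun k => ‖ζ (φ (ψ k))‖) atTop (𝓝 ‖c0‖) :=
      (continuous_norm.tendsto _).comp hψtend
    have h1le : 1 ≤ ‖c0‖ :=
      ge_of_tendsto habs (Eventually.of_forall fun k => (hζO _).le)
    have hΨtend : Tendsto (fun k => Ψ (ζ (φ (ψ k)))) atTop (𝓝 w) := by
      simpa only [hζΨ, Function.comp_def] using hzs_tend.comp ((hφmono.comp hψmono).tendsto_atTop)
    rcases eq_or_lt_of_le h1le with heq | hlt
    · obtain ⟨α, hα⟩ := exists_circlePoint heq.symm
      exact ⟨α, ⟨fun k => ζ (φ (ψ k)), fun k => hζO _, hα ▸ hψtend, hΨtend⟩⟩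
    · exfalso
      have hc : ContinuousAt Ψ c0 := (hΨ.1.differentiableAt (hO.mem_nhds hlt)).continuousAt
      have hw_eq : Ψ c0 = w := tendsto_nhds_unique (hc.tendsto.comp hψtend) hΨtend
      exact hw_not (hw_eq ▸ hΨ.2.mapsTo hlt)
  · -- preimages escape to infinity
    push_neg at hbdd
    have htendInf : Tendsto (fun n => ‖ζ n‖) atTop atTop := by
      rw [Filter.tendsto_atTop]
      intro b
      have := hbdd b
      filter_upwards [this] with n hn
      exact hn.le
    set P : Set ℂ := ball (0:ℂ) 1 \ {0} with hP_def
    have hP_open : IsOpen P := isOpen_ball.sdiff isClosed_singleton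
    set g : ℂ → ℂ := fun z => Ψ z⁻¹ with hg_def
    have hPO : ∀ {z : ℂ}, z ∈ P → z⁻¹ ∈ O := by
      rintro z ⟨hz1, hz0⟩
      have hz0' : z ≠ 0 := by simpa using hz0
      have : ‖z‖ < 1 := by simpa [mem_ball, Complex.dist_eq] using hz1
      have hpos : 0 < ‖z‖ := norm_pos_iff.mpr hz0'
      show 1 < ‖z⁻¹‖
      rw [norm_inv]
      exact (one_lt_inv₀ hpos).mpr this
    have hg_diff : DifferentiableOn ℂ g P := by
      intro z hz
      have hz0 : z ≠ 0 := by simpa using hz.2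
      exact ((hΨ.1.differentiableAt (hO.mem_nhds (hPO hz))).comp z
        (differentiableAt_inv hz0)).differentiableWithinAt
    have hg_inj : InjOn g P := fun a ha b hb h =>
      inv_injective (hΨ.2.injOn (hPO ha) (hPO hb) h)
    have hz0P : (2⁻¹ : ℂ) ∈ P := by
      constructor
      · simp [mem_ball, Complex.dist_eq]; norm_num
      · norm_num
    have hb0 : g 2⁻¹ ∈ basin Q := by
      apply hΨ.2.mapsTo
      show 1 < ‖(2⁻¹ : ℂ)⁻¹‖
      norm_num
    have hwne : w ≠ g 2⁻¹ := fun h => hw_not (h ▸ hb0)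
    have han : AnalyticAt ℂ g 2⁻¹ := hg_diff.analyticAt (hP_open.mem_nhds hz0P)
    rcases han.eventually_constant_or_nhds_le_map_nhds with hconst | hopen
    · exfalso
      have hev : ∀ᶠ z in 𝓝[≠] (2⁻¹:ℂ), (g z = g 2⁻¹ ∧ z ∈ P) ∧ z ≠ 2⁻¹ :=
        (((hconst.and (hP_open.eventually_mem hz0P)).filter_mono nhdsWithin_le_nhds).and
          eventually_mem_nhdsWithin)
      obtain ⟨z, ⟨hz_eq, hzP⟩, hzne⟩ := hev.exists
      exact hzne (hg_inj hzP hz0P hz_eq)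
    · -- open mapping case: removable singularity argument
      have hBP : ball (2⁻¹:ℂ) 4⁻¹ ⊆ P := by
        intro z hz
        rw [mem_ball, Complex.dist_eq] at hz
        constructor
        · rw [mem_ball, Complex.dist_eq]
          calc ‖z - 0‖ = ‖(z - 2⁻¹) + 2⁻¹‖ := by ring_nf
            _ ≤ ‖z - 2⁻¹‖ + ‖(2⁻¹:ℂ)‖ := norm_add_le _ _
            _ < 4⁻¹ + 2⁻¹ := by
                have : ‖(2⁻¹:ℂ)‖ = 2⁻¹ := by norm_num
                rw [this]; linarith
            _ < 1 := by norm_num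
        · simp only [mem_singleton_iff]
          intro h
          rw [h] at hz
          simp only [zero_sub, norm_neg] at hz
          have : ‖(2⁻¹:ℂ)‖ = 2⁻¹ := by norm_num
          rw [this] at hz; norm_num at hz
      have hV : g '' ball (2⁻¹:ℂ) 4⁻¹ ∈ 𝓝 (g 2⁻¹) := by
        apply hopen
        rw [mem_map]
        exact mem_of_superset (ball_mem_nhds _ (by norm_num)) (subset_preimage_image g _)
      obtain ⟨ρ, hρpos, hρ⟩ := Metric.mem_nhds_iff.mp hV
      have hfar : ∀ z : ℂ, z ≠ 0 → ‖z‖ < 4⁻¹ → ρ ≤ dist (g z) (g 2⁻¹) := by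
        intro z hz0 hzlt
        by_contra hlt
        push_neg at hlt
        have : g z ∈ g '' ball (2⁻¹:ℂ) 4⁻¹ := hρ (by rwa [mem_ball])
        obtain ⟨u, hu, hgu⟩ := this
        have hzP : z ∈ P := ⟨by rw [mem_ball, Complex.dist_eq]; simpa using hzlt.trans (by norm_num), by simpa using hz0⟩
        have huz : u = z := hg_inj (hBP hu) hzP hgu
        rw [mem_ball, Complex.dist_eq] at hu
        have h1 : ‖(2⁻¹:ℂ)‖ ≤ ‖u - 2⁻¹‖ + ‖u‖ := by
          calc ‖(2⁻¹:ℂ)‖ = ‖(2⁻¹ - u) + u‖ := by ring_nf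
            _ ≤ ‖2⁻¹ - u‖ + ‖u‖ := norm_add_le _ _
            _ = ‖u - 2⁻¹‖ + ‖u‖ := by rw [norm_sub_rev]
        have h2 : ‖(2⁻¹:ℂ)‖ = 2⁻¹ := by norm_num
        rw [h2, huz] at h1
        rw [huz] at hu
        linarith
      set h : ℂ → ℂ := fun z => (g z - g 2⁻¹)⁻¹ with hh_def
      have hDsub : ball (0:ℂ) 4⁻¹ \ {0} ⊆ P := by
        rintro z ⟨hz1, hz2⟩
        refine ⟨?_, hz2⟩
        rw [mem_ball] at hz1 ⊢
        exact hz1.trans (by norm_num)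
      have hgne : ∀ z ∈ ball (0:ℂ) 4⁻¹ \ {0}, g z - g 2⁻¹ ≠ 0 := by
        rintro z ⟨hz1, hz2⟩
        have := hfar z (by simpa using hz2) (by simpa [mem_ball, Complex.dist_eq] using hz1)
        rw [dist_eq_norm] at this
        intro hcon
        rw [hcon] at this
        simp at this
        linarith
      have hh_diff : DifferentiableOn ℂ h (ball (0:ℂ) 4⁻¹ \ {0}) :=
        ((hg_diff.mono hDsub).sub (differentiableOn_const _)).inv hgne
      have hh_bdd : BddAbove (norm ∘ h '' (ball (0:ℂ) 4⁻¹ \ {0})) := by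
        refine ⟨ρ⁻¹, ?_⟩
        rintro - ⟨z, hz, rfl⟩
        have hd := hfar z (by simpa using hz.2) (by simpa [mem_ball, Complex.dist_eq] using hz.1)
        simp only [Function.comp_apply, hh_def, norm_inv]
        rw [dist_eq_norm] at hd
        exact inv_anti₀ hρpos hd
      set L : ℂ := limUnder (𝓝[≠] (0:ℂ)) h with hL_def
      have htilde : DifferentiableOn ℂ (Function.update h 0 L) (ball (0:ℂ) 4⁻¹) :=
        Complex.differentiableOn_update_limUnder_of_bddAbove
          (ball_mem_nhds _ (by norm_num)) hh_diff hh_bdd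
      have h0mem : (0:ℂ) ∈ ball (0:ℂ) 4⁻¹ := mem_ball_self (by norm_num)
      have hcont0 : ContinuousAt (Function.update h 0 L) 0 :=
        (htilde.differentiableAt (isOpen_ball.mem_nhds h0mem)).continuousAt
      have hζne : ∀ n, ζ n ≠ 0 := fun n => by
        intro hcon
        have := hζO n
        rw [hcon] at this
        simp only [hO_def, mem_setOf_eq, norm_zero] at this
        exact absurd this (by norm_num)
      have hx0 : Tendsto (fun n => (ζ n)⁻¹) atTop (𝓝 0) := by
        rw [tendsto_zero_iff_norm_tendsto_zero]
        have : Tendsto (fun n => ‖ζ n‖⁻¹) atTop (𝓝 0) :=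
          tendsto_inv_atTop_zero.comp htendInf
        simpa [norm_inv] using this
      have hgx : ∀ n, g ((ζ n)⁻¹) = zs n := fun n => by
        rw [hg_def]; simp only [inv_inv]; exact hζΨ n
      have hL1 : Tendsto (fun n => h ((ζ n)⁻¹)) atTop (𝓝 ((w - g 2⁻¹)⁻¹)) := by
        have : Tendsto (fun n => (zs n - g 2⁻¹)⁻¹) atTop (𝓝 ((w - g 2⁻¹)⁻¹)) :=
          ((hzs_tend.sub tendsto_const_nhds).inv₀ (sub_ne_zero.mpr hwne))
        simpa only [hh_def, hgx] using this
      have hL2 : Tendsto (fun n => h ((ζ n)⁻¹)) atTop (𝓝 L) := by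
        have h1 : Tendsto (fun n => Function.update h 0 L ((ζ n)⁻¹)) atTop (𝓝 L) := by
          have := hcont0.tendsto.comp hx0
          rwa [Function.update_self] at this
        refine h1.congr fun n => ?_
        rw [Function.update_of_ne (inv_ne_zero (hζne n))]
      have hLval : L = (w - g 2⁻¹)⁻¹ := tendsto_nhds_unique hL2 hL1
      have hLne : L ≠ 0 := by rw [hLval]; exact inv_ne_zero (sub_ne_zero.mpr hwne)
      have hupd0 : Function.update h 0 L 0 = L := Function.update_self _ _ _
      have hFmem : {z : ℂ | Function.update h 0 L z ≠ 0} ∩ ball (0:ℂ) 4⁻¹ ∈ 𝓝 (0:ℂ) := by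
        refine inter_mem ?_ (ball_mem_nhds _ (by norm_num))
        have : {x : ℂ | x ≠ 0} ∈ 𝓝 (Function.update h 0 L 0) := by
          rw [hupd0]
          exact isOpen_ne.mem_nhds hLne
        exact hcont0.preimage_mem_nhds this
      obtain ⟨ε, hεpos, hε⟩ := Metric.mem_nhds_iff.mp hFmem
      set gt : ℂ → ℂ := fun z => g 2⁻¹ + (Function.update h 0 L z)⁻¹ with hgt_def
      have hgt_diff : DifferentiableOn ℂ gt (ball (0:ℂ) ε) := by
        have hsub : ball (0:ℂ) ε ⊆ ball (0:ℂ) 4⁻¹ := fun z hz => (hε hz).2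
        exact (differentiableOn_const _).add
          ((htilde.mono hsub).inv (fun z hz => (hε hz).1))
      have han0 : AnalyticAt ℂ gt 0 := hgt_diff.analyticAt (ball_mem_nhds _ hεpos)
      have hgt0 : gt 0 = w := by
        show g 2⁻¹ + (Function.update h 0 L 0)⁻¹ = w
        rw [hupd0, hLval, inv_inv]
        ring
      have hgteq : ∀ z : ℂ, z ≠ 0 → z ∈ ball (0:ℂ) ε → gt z = g z := by
        intro z hz0 hzball
        have hzD : z ∈ ball (0:ℂ) 4⁻¹ \ {0} := ⟨(hε hzball).2, by simpa using hz0⟩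
        rw [hgt_def]
        simp only [Function.update_of_ne hz0, hh_def, inv_inv]
        ring
      have hgbasin : ∀ z : ℂ, z ≠ 0 → z ∈ ball (0:ℂ) ε → g z ∈ basin Q := by
        intro z hz0 hzball
        exact hΨ.2.mapsTo (hPO (hDsub ⟨(hε hzball).2, by simpa using hz0⟩))
      rcases han0.eventually_constant_or_nhds_le_map_nhds with hc2 | ho2
      · exfalso
        have hev : ∀ᶠ z in 𝓝[≠] (0:ℂ), (gt z = gt 0 ∧ z ∈ ball (0:ℂ) ε) ∧ z ≠ 0 :=
          ((hc2.and (isOpen_ball.eventually_mem (mem_ball_self hεpos))).filter_mono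
            nhdsWithin_le_nhds).and eventually_mem_nhdsWithin
        obtain ⟨z, ⟨hz_eq, hzball⟩, hz0⟩ := hev.exists
        have : g z = w := by rw [← hgteq z hz0 hzball, hz_eq, hgt0]
        exact hw_not (this ▸ hgbasin z hz0 hzball)
      · have hN : gt '' ball (0:ℂ) ε ∈ 𝓝 w := by
          rw [← hgt0]
          apply ho2
          rw [mem_map]
          exact mem_of_superset (ball_mem_nhds _ hεpos) (subset_preimage_image gt _)
        have hkey : ∀ q ∈ Q, q ∈ gt '' ball (0:ℂ) ε → q = w := by
          rintro q hqQ ⟨z, hzball, rfl⟩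
          by_cases hz0 : z = 0
          · rw [hz0, hgt0]
          · exfalso
            have : gt z ∈ basin Q := (hgteq z hz0 hzball) ▸ hgbasin z hz0 hzball
            exact this.1 hqQ
        -- clopen argument: Q = {w}
        haveI : ConnectedSpace ↥Q := Subtype.connectedSpace hQ.2.1
        have hTopen : IsOpen ((fun q : ↥Q => (q:ℂ)) ⁻¹' (interior (gt '' ball (0:ℂ) ε))) :=
          isOpen_interior.preimage continuous_subtype_val
        have hTeq : ((fun q : ↥Q => (q:ℂ)) ⁻¹' (interior (gt '' ball (0:ℂ) ε))) =
            ((fun q : ↥Q => (q:ℂ)) ⁻¹' {w}) := by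
          ext q
          simp only [mem_preimage, mem_singleton_iff]
          constructor
          · intro hq
            exact hkey q q.2 (interior_subset hq)
          · intro hq
            rw [hq]
            exact mem_interior_iff_mem_nhds.mpr hN
        have hclopen : IsClopen ((fun q : ↥Q => (q:ℂ)) ⁻¹' {w}) := by
          constructor
          · exact isClosed_singleton.preimage continuous_subtype_val
          · rw [← hTeq]; exact hTopen
        have huniv : ((fun q : ↥Q => (q:ℂ)) ⁻¹' {w}) = univ :=
          hclopen.eq_univ ⟨⟨w, hwQ⟩, rfl⟩
        obtain ⟨q0, hq0Q, hq0imp⟩ := hne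
        have : (⟨q0, hq0Q⟩ : ↥Q) ∈ ((fun q : ↥Q => (q:ℂ)) ⁻¹' {w}) := huniv ▸ mem_univ _
        have hq0w : q0 = w := this
        exact ⟨0, hq0w ▸ hq0imp⟩

/-- If a monotone continuous surjection `m` from an unshielded continuum `Q` onto a
compact metric space `Y` collapses every impression to a point, then `Y` is
locally connected, and the induced map `Φ_m : ℝ/ℤ → Y` (sending an angle to the
image of its impression) is a continuous surjection. -/
theorem locally_connected_of_collapse_impressions (Q : Set ℂ) (hQ : Unshielded Q)
    (Ψ : ℂ → ℂ) (hΨ : RiemannMap Q Ψ)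
    (Y : Type) [MetricSpace Y] [CompactSpace Y]
    (m : ↥Q → Y) (hmc : Continuous m) (hms : Function.Surjective m)
    (hmono : ∀ y : Y, IsConnected (m ⁻¹' {y}))
    (hcollapse : ∀ α : AddCircle (1 : ℝ),
      ∃ y : Y, m '' {q : ↥Q | (q : ℂ) ∈ impression Ψ α} = {y}) :
    LocallyConnectedSpace Y ∧
    ∃ Φ : AddCircle (1 : ℝ) → Y,
      (∀ α : AddCircle (1 : ℝ),
        m '' {q : ↥Q | (q : ℂ) ∈ impression Ψ α} = {Φ α}) ∧
      Continuous Φ ∧ Function.Surjective Φ := by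
  classical
  set Φ : AddCircle (1:ℝ) → Y := fun α => (hcollapse α).choose with hΦ_def
  have hΦ : ∀ α, m '' {q : ↥Q | (q : ℂ) ∈ impression Ψ α} = {Φ α} :=
    fun α => (hcollapse α).choose_spec
  have hΦne : ∀ α, ∃ q : ↥Q, (q : ℂ) ∈ impression Ψ α ∧ m q = Φ α := by
    intro α
    have : Φ α ∈ m '' {q : ↥Q | (q : ℂ) ∈ impression Ψ α} := by rw [hΦ α]; rfl
    obtain ⟨q, hq, hmq⟩ := this
    exact ⟨q, hq, hmq⟩
  have hΦval : ∀ α (q : ↥Q), (q : ℂ) ∈ impression Ψ α → m q = Φ α := by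
    intro α q hq
    have : m q ∈ m '' {q : ↥Q | (q : ℂ) ∈ impression Ψ α} := mem_image_of_mem m hq
    rw [hΦ α] at this
    exact this
  have hcover : ∀ w ∈ Q, ∃ α, w ∈ impression Ψ α := by
    apply subset_unionImpression hQ hΨ
    obtain ⟨q, hq, -⟩ := hΦne 0
    exact ⟨(q:ℂ), q.2, hq⟩
  have hΦsurj : Function.Surjective Φ := by
    intro y
    obtain ⟨q, hqy⟩ := hms y
    obtain ⟨α, hα⟩ := hcover (q:ℂ) q.2
    exact ⟨α, (hΦval α q hα).symm.trans hqy⟩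
  -- continuity
  haveI : CompactSpace ↥Q := isCompact_iff_compactSpace.mp hQ.1
  set e : AddCircle (1:ℝ) ≃ₜ Circle := AddCircle.homeomorphCircle one_ne_zero with he_def
  have hΦcont : Continuous Φ := by
    have hseq : SeqContinuous (Φ ∘ e.symm) := by
      intro cs c hc
      have hαs : Tendsto (fun j => e.symm (cs j)) atTop (𝓝 (e.symm c)) :=
        (e.symm.continuous.tendsto _).comp hc
      apply tendsto_of_subseq_tendsto
      intro ns hns
      choose qs hqs1 hqs2 using fun j => hΦne (e.symm (cs j))
      obtain ⟨qlim, φ, hφmono, hφtend⟩ := CompactSpace.tendsto_subseq (fun k => qs (ns k))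
      refine ⟨φ, ?_⟩
      have hcoe : Tendsto (fun n => ((qs (ns (φ n))) : ℂ)) atTop (𝓝 (qlim : ℂ)) :=
        (continuous_subtype_val.tendsto _).comp hφtend
      have hαs2 : Tendsto (fun n => e.symm (cs (ns (φ n)))) atTop (𝓝 (e.symm c)) :=
        hαs.comp (hns.comp hφmono.tendsto_atTop)
      have hlim : (qlim : ℂ) ∈ impression Ψ (e.symm c) :=
        impression_usc Ψ hαs2 (fun n => hqs1 (ns (φ n))) hcoe
      have hmq : Tendsto (fun n => m (qs (ns (φ n)))) atTop (𝓝 (m qlim)) :=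
        (hmc.tendsto _).comp hφtend
      rw [hΦval (e.symm c) qlim hlim] at hmq
      exact hmq.congr (fun n => hqs2 (ns (φ n)))
    have h1 : Continuous (Φ ∘ e.symm) := continuous_iff_seqContinuous.mpr hseq
    have : Φ = (Φ ∘ e.symm) ∘ e := by funext α; simp
    rw [this]
    exact h1.comp e.continuous
  refine ⟨?_, Φ, hΦ, hΦcont, hΦsurj⟩
  haveI : LocallyConnectedSpace (AddCircle (1:ℝ)) :=
    lc_of_quotient (QuotientAddGroup.isQuotientMap_mk _)
  exact lc_of_quotient ((hΦcont.isClosedMap).isQuotientMap hΦcont hΦsurj)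


end
end

section
/- Let Q be a continuum, Y a locally connected continuum, and m : Q → Y a monotone continuous surjection. If a ∈ Q satisfies m⁻¹(m(a)) = {a} (the fiber of m through a is the single point a), then Q is locally connected at a, i.e. every neighborhood of a contains a connected neighborhood of a. -/
open Set Filter Topology Metric

/-- Preimage of a connected set under a continuous closed surjection with connected
fibers is connected. -/
theorem my_preimage_connected {Q Y : Type} [TopologicalSpace Q] [TopologicalSpace Y]
    {m : Q → Y} (hmc : Continuous m) (hcl : IsClosedMap m)
    (hmono : ∀ y : Y, IsConnected (m ⁻¹' {y}))
    {S : Set Y} (hS : IsConnected S) : IsConnected (m ⁻¹' S) := by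
  have hsurj : Function.Surjective m := fun y => (hmono y).nonempty
  set P : Set Q := m ⁻¹' S with hP
  -- the restricted map
  let g : P → S := fun x => ⟨m x, x.2⟩
  have hgc : Continuous g := Continuous.subtype_mk (hmc.comp continuous_subtype_val) _
  -- fibers of g are connected
  have gfib : ∀ t : S, IsConnected (g ⁻¹' {t}) := by
    rintro ⟨y, hy⟩
    have h1 : (g ⁻¹' {⟨y, hy⟩} : Set P) = Subtype.val ⁻¹' (m ⁻¹' {y}) := by
      ext ⟨x, hx⟩
      simp [g, Subtype.ext_iff]
    rw [h1]
    constructor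
    · obtain ⟨x, hx⟩ := (hmono y).nonempty
      have hxP : x ∈ P := by simp only [hP, mem_preimage]; rw [mem_preimage, mem_singleton_iff] at hx; rw [hx]; exact hy
      exact ⟨⟨x, hxP⟩, hx⟩
    · apply IsInducing.subtypeVal.isPreconnected_image.mp
      have : Subtype.val '' (Subtype.val ⁻¹' (m ⁻¹' {y}) : Set P) = m ⁻¹' {y} := by
        rw [Subtype.image_preimage_coe]
        apply inter_eq_right.mpr
        intro x hx
        rw [mem_preimage, mem_singleton_iff] at hx
        simp only [hP, mem_preimage, hx]
        exact hy
      rw [this]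
      exact (hmono y).isPreconnected
  -- closedness transfer for g
  have hclg : ∀ T : Set S, IsClosed T ↔ IsClosed (g ⁻¹' T) := by
    intro T
    constructor
    · exact fun hT => hT.preimage hgc
    · intro hT
      rw [isClosed_induced_iff] at hT ⊢
      obtain ⟨C, hC, hCeq⟩ := hT
      refine ⟨m '' C, hcl C hC, ?_⟩
      ext ⟨y, hy⟩
      simp only [mem_preimage, mem_image]
      constructor
      · rintro ⟨x, hxC, hxy⟩
        have hxP : x ∈ P := by simp only [hP, mem_preimage, hxy]; exact hy
        have : (⟨x, hxP⟩ : P) ∈ Subtype.val ⁻¹' C := hxC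
        rw [hCeq] at this
        have : g ⟨x, hxP⟩ ∈ T := this
        simpa [g, Subtype.ext_iff, hxy] using this
      · intro hyT
        obtain ⟨x, hxy⟩ := hsurj y
        have hxP : x ∈ P := by simp only [hP, mem_preimage, hxy]; exact hy
        have hg : g ⟨x, hxP⟩ = ⟨y, hy⟩ := by simp [g, Subtype.ext_iff, hxy]
        have : (⟨x, hxP⟩ : P) ∈ g ⁻¹' T := by rw [mem_preimage, hg]; exact hyT
        rw [← hCeq] at this
        exact ⟨x, this, hxy⟩
  -- S is a connected space
  haveI : ConnectedSpace S := Subtype.connectedSpace hS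
  obtain ⟨y₀, hy₀⟩ := hS.nonempty
  have hcc : connectedComponent (⟨y₀, hy₀⟩ : S) = univ :=
    PreconnectedSpace.connectedComponent_eq_univ _
  have := preimage_connectedComponent_connected gfib (isCoinducing_iff_isClosed.mpr fun T => (hclg T).symm) (⟨y₀, hy₀⟩ : S)
  rw [hcc, preimage_univ] at this
  constructor
  · obtain ⟨x, hx⟩ := hsurj y₀
    exact ⟨x, by simp only [hP, mem_preimage, hx]; exact hy₀⟩
  · have h3 : (Subtype.val '' (univ : Set P)) = P := by rw [image_univ, Subtype.range_val]
    rw [← h3]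
    exact IsInducing.subtypeVal.isPreconnected_image.mpr this.isPreconnected
    

/-- If `m : Q → Y` is a monotone continuous surjection of a continuum `Q` onto a
locally connected continuum `Y` and the fiber of `m` through `a` is the single
point `a`, then `Q` is locally connected at `a`: every neighborhood of `a`
contains a connected neighborhood of `a`. -/
theorem locally_connected_at_degenerate_fiber
    (Q : Type) [MetricSpace Q] [CompactSpace Q] [ConnectedSpace Q]
    (Y : Type) [MetricSpace Y] [CompactSpace Y] [ConnectedSpace Y]
    [LocallyConnectedSpace Y]
    (m : Q → Y) (hmc : Continuous m) (hms : Function.Surjective m)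
    (hmono : ∀ y : Y, IsConnected (m ⁻¹' {y}))
    (a : Q) (ha : m ⁻¹' {m a} = {a}) :
    ∀ U ∈ 𝓝 a, ∃ V ∈ 𝓝 a, V ⊆ U ∧ IsConnected V := by
  intro U hU
  obtain ⟨U', hU'U, hU'open, haU'⟩ := _root_.mem_nhds_iff.mp hU
  have hclosed : IsClosedMap m := hmc.isClosedMap
  -- build a saturated open neighborhood
  set W : Set Y := (m '' U'ᶜ)ᶜ with hW
  have hWopen : IsOpen W := (hclosed _ hU'open.isClosed_compl).isOpen_compl
  have hmaW : m a ∈ W := by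
    intro hmem
    obtain ⟨x, hxU', hxa⟩ := hmem
    have : x ∈ m ⁻¹' {m a} := by simp [hxa]
    rw [ha, mem_singleton_iff] at this
    exact hxU' (this ▸ haU')
  have hWsub : m ⁻¹' W ⊆ U' := by
    intro x hx
    by_contra hxU'
    exact hx ⟨x, hxU', rfl⟩
  -- shrink to a connected open neighborhood
  obtain ⟨W', hW'W, hW'open, hmaW', hW'conn⟩ :=
    (locallyConnectedSpace_iff_subsets_isOpen_isConnected.mp ‹_›) (m a)
      W (hWopen.mem_nhds hmaW)
  refine ⟨m ⁻¹' W', (hW'open.preimage hmc).mem_nhds hmaW', ?_, ?_⟩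
  · exact fun x hx => hU'U (hWsub (hW'W hx))
  · exact my_preimage_connected hmc hclosed hmono hW'conn
end

section
/- Let Q ⊆ ℂ be an unshielded continuum with Riemann map Ψ as in the context. Suppose C₁ and C₂ are disjoint ray-compacta in Q, each of which ray-separates subsets A, B ⊆ Q. If C₃ is a ray-compactum disjoint from A ∪ B which ray-separates C₁ and C₂, then C₃ also ray-separates A and B. -/
open Set Filter Topology Metric

noncomputable section


namespace MS

/-- the domain `{|z| > 1}` -/
def Dom : Set ℂ := {z | 1 < ‖z‖}

lemma isOpen_Dom : IsOpen Dom :=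
  isOpen_lt continuous_const continuous_norm

lemma abs_circlePoint (α : AddCircle (1 : ℝ)) : ‖circlePoint α‖ = 1 :=
  Circle.norm_coe _

lemma circlePoint_injective : Function.Injective circlePoint :=
  Subtype.coe_injective.comp (AddCircle.injective_toCircle one_ne_zero)

lemma param_mem {α : AddCircle (1 : ℝ)} {r : ℝ} (hr : 1 < r) :
    ((r : ℂ) * circlePoint α) ∈ Dom := by
  simp only [Dom, mem_setOf_eq, norm_mul, abs_circlePoint, Complex.norm_real, Real.norm_eq_abs, mul_one]
  rwa [abs_of_pos (lt_trans one_pos hr)]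

lemma param_subset {α : AddCircle (1 : ℝ)} :
    {z : ℂ | ∃ r : ℝ, 1 < r ∧ z = (r : ℂ) * circlePoint α} ⊆ Dom := by
  rintro z ⟨r, hr, rfl⟩; exact param_mem hr

variable {Q : Set ℂ} {Ψ : ℂ → ℂ}

lemma isOpen_basin (hQ : IsCompact Q) : IsOpen (basin Q) := by
  rw [isOpen_iff_mem_nhds]
  intro z hz
  have hQc : IsOpen Qᶜ := hQ.isClosed.isOpen_compl
  have hK : IsOpen (connectedComponentIn Qᶜ z) := hQc.connectedComponentIn
  have hzK : z ∈ connectedComponentIn Qᶜ z := mem_connectedComponentIn hz.1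
  refine Filter.mem_of_superset (hK.mem_nhds hzK) ?_
  intro y hy
  refine ⟨connectedComponentIn_subset _ _ hy, ?_⟩
  rw [← connectedComponentIn_eq hy]
  exact hz.2

lemma basin_subset_compl : basin Q ⊆ Qᶜ := fun _ hz => hz.1

lemma subset_closure_basin (hQ : Unshielded Q) : Q ⊆ closure (basin Q) := by
  nth_rewrite 1 [hQ.2.2]; exact frontier_subset_closure

lemma extRay_subset_basin (hΨ : RiemannMap Q Ψ) (α : AddCircle (1 : ℝ)) :
    extRay Ψ α ⊆ basin Q := by
  rintro w ⟨z, hz, rfl⟩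
  exact hΨ.2.mapsTo (param_subset hz)

lemma extRay_disjoint (hΨ : RiemannMap Q Ψ) {α β : AddCircle (1 : ℝ)} (h : α ≠ β) :
    Disjoint (extRay Ψ α) (extRay Ψ β) := by
  rw [Set.disjoint_left]
  rintro w ⟨z, ⟨r, hr, rfl⟩, hw⟩ ⟨z', ⟨s, hs, rfl⟩, hw'⟩
  have := hΨ.2.injOn (param_mem hr) (param_mem hs) (hw'.symm ▸ hw)
  have hrs : r = s := by
    have := congrArg (‖·‖) this
    simpa [abs_circlePoint, Complex.norm_real, Real.norm_eq_abs, abs_of_pos (lt_trans one_pos hr),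
      abs_of_pos (lt_trans one_pos hs)] using this
  subst hrs
  have hr0 : (r : ℂ) ≠ 0 := by
    simp only [ne_eq, Complex.ofReal_eq_zero]; linarith
  exact h (circlePoint_injective (mul_left_cancel₀ hr0 this))

lemma isPreconnected_extRay (hΨ : RiemannMap Q Ψ) (α : AddCircle (1 : ℝ)) :
    IsPreconnected (extRay Ψ α) := by
  have hp : {z : ℂ | ∃ r : ℝ, 1 < r ∧ z = (r : ℂ) * circlePoint α}
      = (fun r : ℝ => (r : ℂ) * circlePoint α) '' Ioi 1 := by
    ext z; constructor
    · rintro ⟨r, hr, rfl⟩; exact ⟨r, hr, rfl⟩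
    · rintro ⟨r, hr, rfl⟩; exact ⟨r, hr, rfl⟩
  have hc : IsPreconnected {z : ℂ | ∃ r : ℝ, 1 < r ∧ z = (r : ℂ) * circlePoint α} := by
    rw [hp]
    exact isPreconnected_Ioi.image _
      (Continuous.continuousOn (by continuity))
  exact hc.image Ψ (hΨ.1.continuousOn.mono param_subset)

lemma isPreconnected_exterior {M : ℝ} (hM : 0 < M) :
    IsPreconnected {z : ℂ | M < ‖z‖} := by
  have h2 : (1:Cardinal) < Module.rank ℝ ℂ := by
    rw [Complex.rank_real_complex]; exact Cardinal.one_lt_two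
  have hs : IsPreconnected (sphere (0:ℂ) 1) := isPreconnected_sphere h2 0 1
  have key : {z : ℂ | M < ‖z‖}
      = (fun p : ℝ × ℂ => p.1 • p.2) '' (Ioi M ×ˢ sphere (0:ℂ) 1) := by
    ext z; constructor
    · intro hz
      have hz0 : ‖z‖ ≠ 0 := (hM.trans hz).ne'
      have hz0' : ((‖z‖ : ℝ) : ℂ) ≠ 0 := by
        simpa using hz0
      refine ⟨(‖z‖, (‖z‖ : ℂ)⁻¹ * z), ⟨hz, ?_⟩, ?_⟩
      · simp only [mem_sphere_iff_norm, sub_zero, norm_mul, norm_inv,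
          Complex.norm_real, Real.norm_eq_abs, abs_of_nonneg (norm_nonneg z), norm_inv]
        field_simp
      · simp only [smul_eq_mul, Complex.real_smul, ← mul_assoc]
        rw [mul_inv_cancel₀ hz0', one_mul]
    · rintro ⟨⟨t, u⟩, ⟨ht, hu⟩, rfl⟩
      simp only [mem_sphere_iff_norm, sub_zero] at hu
      simp only [mem_setOf_eq, smul_eq_mul, Complex.real_smul, norm_mul, Complex.norm_real, Real.norm_eq_abs, hu,
        mul_one]
      rw [abs_of_pos (hM.trans ht)]
      exact ht
  rw [key]
  exact (isPreconnected_Ioi.prod hs).image _ (continuous_smul.continuousOn)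

lemma isPreconnected_Dom : IsPreconnected Dom := isPreconnected_exterior one_pos

lemma psi_image_isOpen (hΨ : RiemannMap Q Ψ) {s : Set ℂ} (hs : s ⊆ Dom) (hso : IsOpen s) :
    IsOpen (Ψ '' s) := by
  have ha : AnalyticOnNhd ℂ Ψ Dom := hΨ.1.analyticOnNhd isOpen_Dom
  rcases ha.is_constant_or_isOpen isPreconnected_Dom with h | h
  · exfalso
    obtain ⟨w, hw⟩ := h
    have h2 : (2:ℂ) ∈ Dom := by simp [Dom, Complex.norm_two]
    have h3 : (3:ℂ) ∈ Dom := by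
      simp only [Dom, mem_setOf_eq]
      rw [show (3:ℂ) = ((3:ℝ):ℂ) by norm_num, Complex.norm_real, Real.norm_eq_abs]
      norm_num
    have := hΨ.2.injOn h2 h3 ((hw _ h2).trans (hw _ h3).symm)
    norm_num at this
  · exact h s hs hso

lemma psi_preimage_preconnected (hΨ : RiemannMap Q Ψ) {T : Set ℂ}
    (hTb : T ⊆ basin Q) (hT : IsPreconnected T) :
    IsPreconnected (Dom ∩ Ψ ⁻¹' T) := by
  intro u v hu hv hcov hne1 hne2
  have hA : IsOpen (Ψ '' (Dom ∩ u)) := psi_image_isOpen hΨ inter_subset_left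
    (isOpen_Dom.inter hu)
  have hB : IsOpen (Ψ '' (Dom ∩ v)) := psi_image_isOpen hΨ inter_subset_left
    (isOpen_Dom.inter hv)
  have hTcov : T ⊆ Ψ '' (Dom ∩ u) ∪ Ψ '' (Dom ∩ v) := by
    intro t ht
    obtain ⟨z, hz, rfl⟩ := hΨ.2.surjOn (hTb ht)
    have hzW : z ∈ Dom ∩ Ψ ⁻¹' T := ⟨hz, ht⟩
    rcases hcov hzW with h | h
    · exact Or.inl ⟨z, ⟨hz, h⟩, rfl⟩
    · exact Or.inr ⟨z, ⟨hz, h⟩, rfl⟩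
  have hTA : (T ∩ Ψ '' (Dom ∩ u)).Nonempty := by
    obtain ⟨z, ⟨hzD, hzT⟩, hzu⟩ := hne1
    exact ⟨Ψ z, hzT, ⟨z, ⟨hzD, hzu⟩, rfl⟩⟩
  have hTB : (T ∩ Ψ '' (Dom ∩ v)).Nonempty := by
    obtain ⟨z, ⟨hzD, hzT⟩, hzv⟩ := hne2
    exact ⟨Ψ z, hzT, ⟨z, ⟨hzD, hzv⟩, rfl⟩⟩
  obtain ⟨t, htT, ⟨z₁, hz₁, h₁⟩, ⟨z₂, hz₂, h₂⟩⟩ := hT _ _ hA hB hTcov hTA hTB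
  have hz12 : z₁ = z₂ := hΨ.2.injOn hz₁.1 hz₂.1 (h₁.trans h₂.symm)
  refine ⟨z₁, ⟨⟨hz₁.1, ?_⟩, hz₁.2, hz12 ▸ hz₂.2⟩⟩
  rw [mem_preimage, h₁]; exact htT

lemma exterior_subset_basin {M : ℝ} (hQM : Q ⊆ closedBall (0:ℂ) M) (hM : 0 < M) :
    {z : ℂ | M < ‖z‖} ⊆ basin Q := by
  intro w hw
  have hwQ : w ∉ Q := by
    intro hwq
    have := hQM hwq
    simp only [mem_closedBall, Complex.dist_eq, sub_zero] at this
    exact absurd hw (not_lt.mpr this)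
  have hsub : {z : ℂ | M < ‖z‖} ⊆ Qᶜ := by
    intro v hv hvq
    have := hQM hvq
    simp only [mem_closedBall, Complex.dist_eq, sub_zero] at this
    exact absurd hv (not_lt.mpr this)
  have hcc : {z : ℂ | M < ‖z‖} ⊆ connectedComponentIn Qᶜ w :=
    (isPreconnected_exterior hM).subset_connectedComponentIn hw hsub
  refine ⟨hwQ, fun hb => ?_⟩
  obtain ⟨r, hr⟩ := hb.subset_closedBall (0:ℂ)
  have hmem : ((|r| + M + 1 : ℝ) : ℂ) ∈ {z : ℂ | M < ‖z‖} := by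
    simp only [mem_setOf_eq, Complex.norm_real, Real.norm_eq_abs]
    rw [abs_of_pos (by positivity)]
    linarith [abs_nonneg r]
  have := hr (hcc hmem)
  simp only [mem_closedBall, Complex.dist_eq, sub_zero, Complex.norm_real, Real.norm_eq_abs] at this
  rw [abs_of_pos (by positivity)] at this
  linarith [abs_nonneg r, le_abs_self r]

lemma bound_or_singleton (hQ : Unshielded Q) (hΨ : RiemannMap Q Ψ) :
    (∃ N : ℝ, ∀ z : ℂ, 1 < ‖z‖ → ‖z‖ ≤ 2 → ‖Ψ z‖ ≤ N)
      ∨ ∃ q, Q = {q} := by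
  obtain ⟨r0, hr0⟩ := hQ.1.isBounded.subset_closedBall (0:ℂ)
  set M : ℝ := max r0 1 with hMdef
  have hM1 : (1:ℝ) ≤ M := le_max_right _ _
  have hM0 : (0:ℝ) < M := lt_of_lt_of_le one_pos hM1
  have hQM : Q ⊆ closedBall 0 M := hr0.trans (closedBall_subset_closedBall (le_max_left _ _))
  by_cases hbig : ∀ n : ℕ, ∃ ζ : ℂ, 1 < ‖ζ‖ ∧ 3 < ‖ζ‖ ∧
      M + n < ‖Ψ ζ‖
  · left
    by_contra hN
    push_neg at hN
    have hsub3 : sphere (0:ℂ) 3 ⊆ Dom := by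
      intro x hx
      simp only [mem_sphere_iff_norm, sub_zero] at hx
      simp only [Dom, mem_setOf_eq, hx]
      norm_num
    obtain ⟨B, hB⟩ := (isCompact_sphere (0:ℂ) 3).exists_bound_of_continuousOn
      (hΨ.1.continuousOn.mono hsub3)
    obtain ⟨n, hn⟩ := exists_nat_gt (B - M)
    have hMn0 : (0:ℝ) < M + n := by positivity
    have hWpre : IsPreconnected (Dom ∩ Ψ ⁻¹' {w : ℂ | M + n < ‖w‖}) := by
      apply psi_preimage_preconnected hΨ
      · intro w hw
        refine exterior_subset_basin hQM hM0 ?_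
        simp only [mem_setOf_eq] at hw ⊢
        have : (0:ℝ) ≤ (n:ℝ) := Nat.cast_nonneg n
        linarith
      · exact isPreconnected_exterior hMn0
    obtain ⟨zb, hzb1, hzb2, hzb3⟩ := hN (M + n)
    obtain ⟨ζ, hζ1, hζ3, hζΨ⟩ := hbig n
    have hzbW : zb ∈ Dom ∩ Ψ ⁻¹' {w : ℂ | M + n < ‖w‖} := ⟨hzb1, hzb3⟩
    have hζW : ζ ∈ Dom ∩ Ψ ⁻¹' {w : ℂ | M + n < ‖w‖} := ⟨hζ1, hζΨ⟩
    obtain ⟨x, hxW, hx3⟩ := hWpre.intermediate_value₂ hzbW hζW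
      (continuous_norm.continuousOn) continuousOn_const
      (by linarith) (le_of_lt hζ3)
    have hxs : x ∈ sphere (0:ℂ) 3 := by
      simp only [mem_sphere_iff_norm, sub_zero, hx3]
    have h1 := hB x hxs
    have h2 := hxW.2
    simp only [mem_preimage, mem_setOf_eq] at h2
    linarith
  · right
    push_neg at hbig
    obtain ⟨n₀, hn₀⟩ := hbig
    have hbound : ∀ ζ : ℂ, 3 < ‖ζ‖ → ‖Ψ ζ‖ ≤ M + n₀ := by
      intro ζ h3
      exact hn₀ ζ (by linarith) h3
    set f : ℂ → ℂ := fun ζ => Ψ ζ⁻¹ with hf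
    have hballnhds : ball (0:ℂ) (1/4) ∈ 𝓝 (0:ℂ) := ball_mem_nhds _ (by norm_num)
    have hinv : ∀ ζ : ℂ, ζ ∈ ball (0:ℂ) (1/4) \ {0} → 3 < ‖ζ⁻¹‖ := by
      intro ζ hζ
      have h1 : ‖ζ‖ < 1/4 := by
        have := hζ.1
        simpa [Complex.dist_eq] using this
      have h0 : ζ ≠ 0 := hζ.2
      have h0' : 0 < ‖ζ‖ := norm_pos_iff.mpr h0
      rw [norm_inv]
      rw [lt_inv_comm₀ (by norm_num) h0']
      · linarith
    have hfd : DifferentiableOn ℂ f (ball (0:ℂ) (1/4) \ {0}) := by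
      intro ζ hζ
      have h3 : 3 < ‖ζ⁻¹‖ := hinv ζ hζ
      have hdom : ζ⁻¹ ∈ Dom := by
        simp only [Dom, mem_setOf_eq]; linarith
      have h0 : ζ ≠ 0 := hζ.2
      exact ((hΨ.1.differentiableAt (isOpen_Dom.mem_nhds hdom)).comp ζ
        (differentiableAt_inv h0)).differentiableWithinAt
    have hfb : BddAbove (norm ∘ f '' (ball (0:ℂ) (1/4) \ {0})) := by
      refine ⟨M + n₀, ?_⟩
      rintro y ⟨ζ, hζ, rfl⟩
      simp only [Function.comp_apply]
      exact hbound _ (hinv ζ hζ)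
    set F : ℂ → ℂ := Function.update f 0 (limUnder (𝓝[≠] (0:ℂ)) f) with hF
    have hFd : DifferentiableOn ℂ F (ball (0:ℂ) (1/4)) :=
      Complex.differentiableOn_update_limUnder_of_bddAbove hballnhds hfd hfb
    have hne : ∀ ζ : ℂ, ζ ≠ 0 → F ζ = Ψ ζ⁻¹ := by
      intro ζ h
      simp [hF, Function.update_of_ne h, hf]
    have hFan : AnalyticOnNhd ℂ F (ball (0:ℂ) (1/4)) := hFd.analyticOnNhd isOpen_ball
    have hFopen : ∀ s ⊆ ball (0:ℂ) (1/4), IsOpen s → IsOpen (F '' s) := by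
      rcases hFan.is_constant_or_isOpen (convex_ball _ _).isPreconnected with h | h
      · exfalso
        obtain ⟨w, hw⟩ := h
        have h5m : (5:ℂ)⁻¹ ∈ ball (0:ℂ) (1/4) := by
          simp only [mem_ball, Complex.dist_eq, sub_zero, norm_inv]
          rw [show ‖(5:ℂ)‖ = 5 by
            rw [show (5:ℂ) = ((5:ℝ):ℂ) by norm_num, Complex.norm_real, Real.norm_eq_abs]; norm_num]
          norm_num
        have h6m : (6:ℂ)⁻¹ ∈ ball (0:ℂ) (1/4) := by
          simp only [mem_ball, Complex.dist_eq, sub_zero, norm_inv]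
          rw [show ‖(6:ℂ)‖ = 6 by
            rw [show (6:ℂ) = ((6:ℝ):ℂ) by norm_num, Complex.norm_real, Real.norm_eq_abs]; norm_num]
          norm_num
        have h5D : (5:ℂ) ∈ Dom := by
          simp only [Dom, mem_setOf_eq]
          rw [show (5:ℂ) = ((5:ℝ):ℂ) by norm_num, Complex.norm_real, Real.norm_eq_abs]; norm_num
        have h6D : (6:ℂ) ∈ Dom := by
          simp only [Dom, mem_setOf_eq]
          rw [show (6:ℂ) = ((6:ℝ):ℂ) by norm_num, Complex.norm_real, Real.norm_eq_abs]; norm_num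
        have e5 : Ψ 5 = w := by
          have := hw _ h5m
          rwa [hne _ (by norm_num), inv_inv] at this
        have e6 : Ψ 6 = w := by
          have := hw _ h6m
          rwa [hne _ (by norm_num), inv_inv] at this
        have := hΨ.2.injOn h5D h6D (e5.trans e6.symm)
        norm_num at this
      · exact h
    have hcont : ContinuousAt F 0 := (hFd.differentiableAt hballnhds).continuousAt
    have hf₀cl : F 0 ∈ closure (basin Q) := by
      rw [mem_closure_iff_nhds]
      intro t ht
      obtain ⟨δ, hδ0, hδ⟩ := Metric.mem_nhds_iff.mp (hcont ht)
      set ζ : ℂ := ((min δ (1/4) / 2 : ℝ) : ℂ) with hζdef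
      have hζpos : (0:ℝ) < min δ (1/4) / 2 := by
        have : (0:ℝ) < min δ (1/4) := lt_min hδ0 (by norm_num)
        linarith
      have hζabs : ‖ζ‖ = min δ (1/4) / 2 := by
        rw [hζdef, Complex.norm_real, Real.norm_eq_abs, abs_of_pos hζpos]
      have hζball : ζ ∈ ball (0:ℂ) δ := by
        simp only [mem_ball, Complex.dist_eq, sub_zero, hζabs]
        have : min δ (1/4) ≤ δ := min_le_left _ _
        linarith
      have hζ0 : ζ ≠ 0 := by
        rw [hζdef]
        simp only [ne_eq, Complex.ofReal_eq_zero]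
        linarith
      have hζdom : ζ⁻¹ ∈ Dom := by
        simp only [Dom, mem_setOf_eq, norm_inv, hζabs]
        rw [one_lt_inv_iff₀]
        constructor
        · exact hζpos
        · have : min δ (1/4) ≤ 1/4 := min_le_right _ _
          linarith
      refine ⟨F ζ, hδ hζball, ?_⟩
      rw [hne ζ hζ0]
      exact hΨ.2.mapsTo hζdom
    have hf₀nb : F 0 ∉ basin Q := by
      intro hfb0
      obtain ⟨z₁, hz₁, hz₁e⟩ := hΨ.2.surjOn hfb0
      have hz₁D : (1:ℝ) < ‖z₁‖ := hz₁
      set ε : ℝ := min (1/4) ((‖z₁‖ + 1)⁻¹) with hεdef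
      have hε0 : 0 < ε := by
        apply lt_min (by norm_num)
        positivity
      have hV₁ : IsOpen (F '' ball 0 ε) :=
        hFopen _ (ball_subset_ball (min_le_left _ _)) isOpen_ball
      have hV₂ : IsOpen (Ψ '' (Dom ∩ ball z₁ 1)) :=
        psi_image_isOpen hΨ inter_subset_left (isOpen_Dom.inter isOpen_ball)
      have hmem₁ : F 0 ∈ F '' ball 0 ε := ⟨0, mem_ball_self hε0, rfl⟩
      have hmem₂ : F 0 ∈ Ψ '' (Dom ∩ ball z₁ 1) := ⟨z₁, ⟨hz₁, mem_ball_self one_pos⟩, hz₁e⟩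
      obtain ⟨δ, hδ0, hδ⟩ := Metric.isOpen_iff.mp (hV₁.inter hV₂) _ ⟨hmem₁, hmem₂⟩
      set u : ℂ := F 0 + ((δ/2 : ℝ) : ℂ) with hudef
      have hu : u ∈ ball (F 0) δ := by
        simp only [hudef, mem_ball, Complex.dist_eq, add_sub_cancel_left, Complex.norm_real, Real.norm_eq_abs]
        rw [abs_of_pos (by linarith)]
        linarith
      have hune : u ≠ F 0 := by
        simp only [hudef, ne_eq, add_eq_left, Complex.ofReal_eq_zero]
        intro h; linarith
      obtain ⟨hu₁, hu₂⟩ := hδ hu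
      obtain ⟨ζ, hζball, hζe⟩ := hu₁
      have hζ0 : ζ ≠ 0 := by
        rintro rfl
        exact hune (hζe ▸ rfl)
      have h1 : Ψ ζ⁻¹ = u := by rw [← hne ζ hζ0]; exact hζe
      have hζabs : ‖ζ‖ < ε := by
        have := hζball
        simpa [Complex.dist_eq] using this
      have hζpos : 0 < ‖ζ‖ := norm_pos_iff.mpr hζ0
      have habs : ‖z₁‖ + 1 < ‖ζ⁻¹‖ := by
        rw [norm_inv]
        have hεle : ε ≤ (‖z₁‖ + 1)⁻¹ := min_le_right _ _
        have h2 : ‖ζ‖ < (‖z₁‖ + 1)⁻¹ := lt_of_lt_of_le hζabs hεle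
        have hz₁pos : (0:ℝ) < ‖z₁‖ + 1 := by positivity
        rw [lt_inv_comm₀ hz₁pos hζpos]
        exact h2
      have hζinvD : ζ⁻¹ ∈ Dom := by
        simp only [Dom, mem_setOf_eq]
        linarith
      obtain ⟨z₂, ⟨hz₂D, hz₂b⟩, hz₂e⟩ := hu₂
      have hz₂eq : z₂ = ζ⁻¹ := hΨ.2.injOn hz₂D hζinvD (hz₂e.trans h1.symm)
      have hz₂abs : ‖z₂‖ < ‖z₁‖ + 1 := by
        have hb : ‖z₂ - z₁‖ < 1 := by
          have := hz₂b
          simpa [Complex.dist_eq] using this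
        calc ‖z₂‖ = ‖z₂ - z₁ + z₁‖ := by ring_nf
          _ ≤ ‖z₂ - z₁‖ + ‖z₁‖ := norm_add_le _ _
          _ < ‖z₁‖ + 1 := by linarith
      rw [hz₂eq] at hz₂abs
      linarith
    have hf₀Q : F 0 ∈ Q := by
      rw [hQ.2.2, frontier, (isOpen_basin hQ.1).interior_eq]
      exact ⟨hf₀cl, hf₀nb⟩
    have hU₀ : IsOpen (F '' ball (0:ℂ) (1/4)) := hFopen _ subset_rfl isOpen_ball
    have hU₀sub : F '' ball (0:ℂ) (1/4) ⊆ basin Q ∪ {F 0} := by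
      rintro y ⟨ζ, hζ, rfl⟩
      by_cases h0 : ζ = 0
      · subst h0; right; rfl
      · left
        rw [hne ζ h0]
        apply hΨ.2.mapsTo
        have hζab : ‖ζ‖ < 1/4 := by
          have := hζ
          simpa [Complex.dist_eq] using this
        have hζpos : 0 < ‖ζ‖ := norm_pos_iff.mpr h0
        simp only [Dom, mem_setOf_eq, norm_inv]
        rw [one_lt_inv_iff₀]
        exact ⟨hζpos, by linarith⟩
    refine ⟨F 0, ?_⟩
    have hQpre := hQ.2.1.isPreconnected
    by_contra hQne
    have hQc : (Q ∩ {F 0}ᶜ).Nonempty := by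
      by_contra h'
      apply hQne
      apply Subset.antisymm
      · intro q hq
        by_contra hq'
        exact h' ⟨q, hq, hq'⟩
      · intro q hq
        rw [mem_singleton_iff] at hq
        rw [hq]; exact hf₀Q
    have hcov : Q ⊆ F '' ball (0:ℂ) (1/4) ∪ {F 0}ᶜ := by
      intro q _
      by_cases h : q = F 0
      · left; rw [h]; exact ⟨0, mem_ball_self (by norm_num), rfl⟩
      · right; exact h
    obtain ⟨x, hxQ, hxU, hxc⟩ := hQpre (F '' ball (0:ℂ) (1/4)) {F 0}ᶜ hU₀
      isOpen_compl_singleton hcov ⟨F 0, hf₀Q, ⟨0, mem_ball_self (by norm_num), rfl⟩⟩ hQc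
    rcases hU₀sub hxU with hxb | hxf
    · exact basin_subset_compl hxb hxQ
    · exact hxc hxf

lemma principalSet_nonempty (hΨ : RiemannMap Q Ψ)
    (hbound : ∃ N : ℝ, ∀ z : ℂ, 1 < ‖z‖ → ‖z‖ ≤ 2 → ‖Ψ z‖ ≤ N)
    (θ : AddCircle (1:ℝ)) : (principalSet Ψ θ).Nonempty := by
  obtain ⟨N, hN⟩ := hbound
  set e : ℂ := circlePoint θ with he
  set zseq : ℕ → ℂ := fun n => ((1 + 1/(n+1) : ℝ) : ℂ) * e with hzseq
  have hr : ∀ n : ℕ, (1:ℝ) < 1 + 1/(n+1) := by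
    intro n
    have : (0:ℝ) < 1/(n+1) := by positivity
    linarith
  have habs : ∀ n, ‖zseq n‖ = 1 + 1/(n+1) := by
    intro n
    rw [hzseq]
    simp only [norm_mul, Complex.norm_real, Real.norm_eq_abs, he, abs_circlePoint, mul_one]
    rw [abs_of_pos (by positivity)]
  have hle2 : ∀ n, ‖zseq n‖ ≤ 2 := by
    intro n
    rw [habs n]
    have h1 : (1:ℝ)/(n+1) ≤ 1 := by
      rw [div_le_one (by positivity)]
      have : (0:ℝ) ≤ n := Nat.cast_nonneg n
      linarith
    linarith
  have hmemD : ∀ n, 1 < ‖zseq n‖ := by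
    intro n; rw [habs n]; exact hr n
  have hmemRay : ∀ n, Ψ (zseq n) ∈ extRay Ψ θ := by
    intro n
    exact ⟨zseq n, ⟨_, hr n, rfl⟩, rfl⟩
  have hball : ∀ n, Ψ (zseq n) ∈ closedBall (0:ℂ) N := by
    intro n
    simp only [mem_closedBall, Complex.dist_eq, sub_zero]
    exact hN _ (hmemD n) (hle2 n)
  obtain ⟨w, _, φ, hφ, hconv⟩ :=
    (isCompact_closedBall (0:ℂ) N).tendsto_subseq hball
  have hwcl : w ∈ closure (extRay Ψ θ) :=
    mem_closure_of_tendsto hconv (Eventually.of_forall fun n => hmemRay (φ n))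
  refine ⟨w, hwcl, ?_⟩
  rintro ⟨z₀, ⟨s, hs, rfl⟩, hweq⟩
  set δ : ℝ := (s - 1)/2 with hδdef
  have hδ0 : 0 < δ := by rw [hδdef]; linarith
  have hopen : IsOpen (Ψ '' (Dom ∩ ball ((s:ℂ) * e) δ)) :=
    psi_image_isOpen hΨ inter_subset_left (isOpen_Dom.inter isOpen_ball)
  have hwmem : w ∈ Ψ '' (Dom ∩ ball ((s:ℂ) * e) δ) :=
    ⟨(s:ℂ) * e, ⟨param_mem hs, mem_ball_self hδ0⟩, hweq⟩
  have hev1 : ∀ᶠ n in atTop, Ψ (zseq (φ n)) ∈ Ψ '' (Dom ∩ ball ((s:ℂ) * e) δ) :=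
    hconv.eventually (hopen.mem_nhds hwmem)
  have hev2 : ∀ᶠ n in atTop, (1:ℝ)/(φ n + 1) < δ := by
    obtain ⟨m, hm⟩ := exists_nat_gt (1/δ)
    rw [eventually_atTop]
    refine ⟨m, fun n hn => ?_⟩
    have hφn : (m:ℝ) ≤ φ n := by
      exact_mod_cast le_trans hn (hφ.le_apply)
    rw [div_lt_iff₀ (by positivity)]
    rw [div_lt_iff₀ hδ0] at hm
    calc (1:ℝ) < δ * m := by linarith [hm]
      _ ≤ δ * (φ n + 1) := by
          apply mul_le_mul_of_nonneg_left _ (le_of_lt hδ0)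
          linarith
  obtain ⟨n, hn1, hn2⟩ := (hev1.and hev2).exists
  obtain ⟨y, ⟨hyD, hyb⟩, hye⟩ := hn1
  have hzeq : zseq (φ n) = y := hΨ.2.injOn (hmemD (φ n)) hyD hye.symm
  rw [← hzeq] at hyb
  have hdist : ‖zseq (φ n) - (s:ℂ) * e‖ < δ := by
    have := hyb
    simpa [Complex.dist_eq] using this
  have hcalc : zseq (φ n) - (s:ℂ) * e = (((1 + 1/(φ n + 1) - s : ℝ)) : ℂ) * e := by
    rw [hzseq]
    push_cast
    ring
  rw [hcalc] at hdist
  simp only [norm_mul, Complex.norm_real, Real.norm_eq_abs, he, abs_circlePoint, mul_one] at hdist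
  have hlt : 1 + 1/((φ n : ℝ) + 1) - s < 0 := by
    have : (0:ℝ) < 1/((φ n : ℝ)+1) := by positivity
    rw [hδdef] at hn2
    linarith
  rw [abs_of_neg hlt] at hdist
  rw [hδdef] at hdist hn2
  linarith

end MS

namespace MS

variable {Q : Set ℂ} {Ψ : ℂ → ℂ}

lemma not_mem_tilde_of_mem_Q (hΨ : RiemannMap Q Ψ) (C : RayCompactum Q Ψ)
    {q : ℂ} (hq : q ∈ Q) (hqc : q ∉ C.carrier) : q ∉ C.tilde := by
  rintro (h | h)
  · exact hqc h
  · rw [mem_iUnion₂] at h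
    obtain ⟨θ, _, hray⟩ := h
    exact (extRay_subset_basin hΨ θ hray).1 hq

lemma meets_carrier (hQ : Unshielded Q) (hΨ : RiemannMap Q Ψ)
    {A B : Set ℂ} (hA : A ⊆ Q) (hB : B ⊆ Q)
    (C C₃ : RayCompactum Q Ψ)
    (hC : RaySeparates C A B)
    (hcc : Disjoint C₃.carrier C.carrier)
    (hbound : ∃ N : ℝ, ∀ z : ℂ, 1 < ‖z‖ → ‖z‖ ≤ 2 →
      ‖Ψ z‖ ≤ N)
    {z : ℂ} (hz : z ∈ closure (basin Q) \ C₃.tilde)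
    {a b : ℂ}
    (haK : a ∈ connectedComponentIn (closure (basin Q) \ C₃.tilde) z) (haA : a ∈ A)
    (hbK : b ∈ connectedComponentIn (closure (basin Q) \ C₃.tilde) z) (hbB : b ∈ B) :
    (connectedComponentIn (closure (basin Q) \ C₃.tilde) z ∩ C.carrier).Nonempty := by
  set S : Set ℂ := closure (basin Q) \ C₃.tilde with hS
  set K : Set ℂ := connectedComponentIn S z with hK
  have hKsub : K ⊆ S := connectedComponentIn_subset _ _
  -- Step A : K meets C.tilde
  have hstepA : (K ∩ C.tilde).Nonempty := by
    by_contra hno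
    rw [not_nonempty_iff_eq_empty] at hno
    have hKsub₁ : K ⊆ closure (basin Q) \ C.tilde := by
      intro x hx
      refine ⟨(hKsub hx).1, fun ht => ?_⟩
      have : x ∈ K ∩ C.tilde := ⟨hx, ht⟩
      rw [hno] at this
      exact this
    have haS₁ : a ∈ closure (basin Q) \ C.tilde := hKsub₁ haK
    have hKcc : K ⊆ connectedComponentIn (closure (basin Q) \ C.tilde) a :=
      (isPreconnected_connectedComponentIn).subset_connectedComponentIn haK hKsub₁
    exact hC.2 a haS₁ ⟨⟨a, hKcc haK, haA⟩, ⟨b, hKcc hbK, hbB⟩⟩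
  obtain ⟨p, hpK, hpt⟩ := hstepA
  rcases hpt with hpc | hpr
  · exact ⟨p, hpK, hpc⟩
  · rw [mem_iUnion₂] at hpr
    obtain ⟨θ, hθ, hpray⟩ := hpr
    have hθ3 : θ ∉ C₃.angles := by
      intro h
      exact (hKsub hpK).2 (Or.inr (mem_iUnion₂.mpr ⟨θ, h, hpray⟩))
    have hcarrS : C.carrier ⊆ S := by
      intro x hx
      have hxQ : x ∈ Q := C.carrier_subset hx
      refine ⟨subset_closure_basin hQ hxQ, ?_⟩
      apply not_mem_tilde_of_mem_Q hΨ C₃ hxQ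
      exact fun h3 => (Set.disjoint_left.mp hcc h3) hx
    have hrayS : extRay Ψ θ ⊆ S := by
      intro x hx
      have hxb : x ∈ basin Q := extRay_subset_basin hΨ θ hx
      refine ⟨subset_closure hxb, ?_⟩
      rintro (h | h)
      · exact hxb.1 (C₃.carrier_subset h)
      · rw [mem_iUnion₂] at h
        obtain ⟨φ, hφ, hxφ⟩ := h
        have hne : θ ≠ φ := fun he => hθ3 (he ▸ hφ)
        exact Set.disjoint_left.mp (extRay_disjoint hΨ hne) hx hxφ
    have hTS : closure (extRay Ψ θ) ⊆ S := by
      intro x hx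
      by_cases hx' : x ∈ extRay Ψ θ
      · exact hrayS hx'
      · exact hcarrS (C.principal_subset θ hθ ⟨hx, hx'⟩)
    have hTK : closure (extRay Ψ θ) ⊆ K := by
      have h1 : closure (extRay Ψ θ) ⊆ connectedComponentIn S p :=
        (isPreconnected_extRay hΨ θ).closure.subset_connectedComponentIn
          (subset_closure hpray) hTS
      rw [hK, connectedComponentIn_eq hpK]
      exact h1
    obtain ⟨w, hw⟩ := principalSet_nonempty hΨ hbound θ
    exact ⟨w, hTK hw.1, C.principal_subset θ hθ hw⟩

end MS


/-- If disjoint ray-compacta `C₁, C₂` each ray-separate `A` and `B`, and a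
ray-compactum `C₃` disjoint from `A ∪ B` ray-separates `C₁` and `C₂`, then `C₃`
also ray-separates `A` and `B`. -/
theorem middle_raySeparates (Q : Set ℂ) (hQ : Unshielded Q)
    (Ψ : ℂ → ℂ) (hΨ : RiemannMap Q Ψ)
    (A B : Set ℂ) (hA : A ⊆ Q) (hB : B ⊆ Q)
    (C₁ C₂ C₃ : RayCompactum Q Ψ)
    (hdisj : Disjoint C₁.carrier C₂.carrier)
    (h₁ : RaySeparates C₁ A B) (h₂ : RaySeparates C₂ A B)
    (h₃disj : Disjoint C₃.carrier (A ∪ B))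
    (h₃ : RaySeparates C₃ C₁.carrier C₂.carrier) :
    RaySeparates C₃ A B := by
  constructor
  · exact Set.disjoint_iff_inter_eq_empty.mp h₃disj
  · intro z hz
    rintro ⟨⟨a, haK, haA⟩, ⟨b, hbK, hbB⟩⟩
    have hAB : ∀ q ∈ A, q ∈ B → False := by
      intro q hqA hqB
      have hqQ : q ∈ Q := hA hqA
      have hq1 : q ∉ C₁.carrier := by
        intro h
        have : q ∈ C₁.carrier ∩ (A ∪ B) := ⟨h, Or.inl hqA⟩
        rw [h₁.1] at this
        exact this
      have hqS : q ∈ closure (basin Q) \ C₁.tilde :=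
        ⟨MS.subset_closure_basin hQ hqQ, MS.not_mem_tilde_of_mem_Q hΨ C₁ hqQ hq1⟩
      exact h₁.2 q hqS ⟨⟨q, mem_connectedComponentIn hqS, hqA⟩,
        ⟨q, mem_connectedComponentIn hqS, hqB⟩⟩
    rcases MS.bound_or_singleton hQ hΨ with hbound | ⟨q, hQq⟩
    · have hd1 : Disjoint C₃.carrier C₁.carrier := by
        rw [Set.disjoint_left]
        intro x hx h1
        have : x ∈ C₃.carrier ∩ (C₁.carrier ∪ C₂.carrier) := ⟨hx, Or.inl h1⟩
        rw [h₃.1] at this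
        exact this
      have hd2 : Disjoint C₃.carrier C₂.carrier := by
        rw [Set.disjoint_left]
        intro x hx h1
        have : x ∈ C₃.carrier ∩ (C₁.carrier ∪ C₂.carrier) := ⟨hx, Or.inr h1⟩
        rw [h₃.1] at this
        exact this
      exact h₃.2 z hz
        ⟨MS.meets_carrier hQ hΨ hA hB C₁ C₃ h₁ hd1 hbound hz haK haA hbK hbB,
         MS.meets_carrier hQ hΨ hA hB C₂ C₃ h₂ hd2 hbound hz haK haA hbK hbB⟩
    · have ha : a = q := by
        have := hA haA
        rw [hQq] at this
        exact this
      have hb : b = q := by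
        have := hB hbB
        rw [hQq] at this
        exact this
      exact hAB a haA (by rw [ha, ← hb]; exact hbB)


end
end
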